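/- arXiv:2103.06481 — 5 statements merged into one kernel-verified Lean document; each statement's English description precedes it below -/
import Mathlib

section
/- There exists N such that for all integers n ≥ N and all integers s with n < s < 2n, one has ∑_{i=0}^{⌊n − s/2⌋} f_{n,i} − f_{n,s} < 0, where ⌊·⌋ denotes the integer part. -/
/-- `f_{n,i}`: the coefficient of `x^i` in `(1 + x + x²)^n`. -/
noncomputable def coeff3 (n i : ℕ) : ℕ :=
  (((1 + Polynomial.X + Polynomial.X ^ 2 : Polynomial ℕ)) ^ n).coeff i

namespace T3

open Polynomial Finset

noncomputable def pp : Polynomial ℕ := 1 + Polynomial.X + Polynomial.X ^ 2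
lemma coeff3_def (n i : ℕ) : coeff3 n i = ((pp) ^ n).coeff i := rfl
lemma pp_eq : pp = X ^ 2 + (X + 1) := by unfold pp; ring
lemma pp_monic : pp.Monic := by
  rw [pp_eq]; apply Polynomial.monic_X_pow_add
  apply lt_of_le_of_lt (Polynomial.degree_add_le _ _)
  simp only [Polynomial.degree_X, Polynomial.degree_one]; norm_num
lemma pp_natDegree : pp.natDegree = 2 := by
  have h : (X + 1 : Polynomial ℕ).degree < (X ^ 2 : Polynomial ℕ).degree := by
    rw [Polynomial.degree_X_pow]
    apply lt_of_le_of_lt (Polynomial.degree_add_le _ _)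
    simp only [Polynomial.degree_X, Polynomial.degree_one]; norm_num
  rw [pp_eq, Polynomial.natDegree_add_eq_left_of_degree_lt h, Polynomial.natDegree_X_pow]
lemma ppn_natDegree (n : ℕ) : (pp ^ n).natDegree = 2 * n := by
  rw [pp_monic.natDegree_pow, pp_natDegree, mul_comm]
lemma coeff3_eq_zero {n i : ℕ} (h : 2 * n < i) : coeff3 n i = 0 := by
  rw [coeff3_def]; apply Polynomial.coeff_eq_zero_of_natDegree_lt; rw [ppn_natDegree]; exact h

-- superadditivity
lemma coeff3_superadd (a b i j : ℕ) : coeff3 a i * coeff3 b j ≤ coeff3 (a + b) (i + j) := by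
  simp only [coeff3_def, pow_add]
  rw [Polynomial.coeff_mul]
  exact Finset.single_le_sum (f := fun x : ℕ × ℕ => (pp ^ a).coeff x.1 * (pp ^ b).coeff x.2)
    (fun x _ => Nat.zero_le _) (Finset.HasAntidiagonal.mem_antidiagonal.mpr rfl : ((i, j) : ℕ × ℕ) ∈ _)

lemma coeff3_zero (n : ℕ) : coeff3 n 0 = 1 := by
  rw [coeff3_def, Polynomial.coeff_zero_eq_eval_zero]
  have : pp.eval 0 = 1 := by unfold pp; simp
  rw [Polynomial.eval_pow, this, one_pow]

-- evaluation identity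
lemma eval_identity (n B : ℕ) :
    (1 + B + B ^ 2) ^ n = ∑ i ∈ Finset.range (2 * n + 1), coeff3 n i * B ^ i := by
  have hd : (pp ^ n).natDegree < 2 * n + 1 := by rw [ppn_natDegree]; omega
  have h1 := Polynomial.eval_eq_sum_range' hd B
  simp only [coeff3_def]
  rw [← h1, Polynomial.eval_pow]
  have : pp.eval B = 1 + B + B ^ 2 := by unfold pp; simp
  rw [this]

lemma coeff3_le_pow (n i : ℕ) : coeff3 n i ≤ 3 ^ n := by
  rcases le_or_gt i (2 * n) with h | h
  · have h3 := eval_identity n 1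
    norm_num at h3
    have hle : coeff3 n i ≤ ∑ j ∈ Finset.range (2 * n + 1), coeff3 n j :=
      Finset.single_le_sum (f := fun j => coeff3 n j) (fun j _ => Nat.zero_le _)
        (Finset.mem_range.mpr (by omega))
    exact hle.trans (le_of_eq h3.symm)
  · rw [coeff3_eq_zero h]; exact Nat.zero_le _

-- symmetry
lemma pp_coeff_zero : pp.coeff 0 = 1 := by unfold pp; simp
lemma pp_coeff_one : pp.coeff 1 = 1 := by unfold pp; simp [Polynomial.coeff_one]
lemma pp_coeff_two : pp.coeff 2 = 1 := by unfold pp; simp [Polynomial.coeff_one, Polynomial.coeff_X]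

lemma pp_reverse : pp.reverse = pp := by
  ext i
  rw [Polynomial.coeff_reverse, pp_natDegree]
  rcases i with _ | _ | _ | i
  · rw [Polynomial.revAt_le (by omega)]
    show pp.coeff 2 = pp.coeff 0
    rw [pp_coeff_two, pp_coeff_zero]
  · rw [Polynomial.revAt_le (by omega)]
  · rw [Polynomial.revAt_le (by omega)]
    show pp.coeff 0 = pp.coeff 2
    rw [pp_coeff_two, pp_coeff_zero]
  · rw [Polynomial.revAt_eq_self_of_lt (by omega)]

lemma ppn_reverse (n : ℕ) : (pp ^ n).reverse = pp ^ n := by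
  induction n with
  | zero =>
      show Polynomial.reverse (1 : Polynomial ℕ) = 1
      rw [← Polynomial.C_1, Polynomial.reverse_C]
  | succ m ih =>
      rw [pow_succ, Polynomial.reverse_mul, ih, pp_reverse]
      rw [(pp_monic.pow m).leadingCoeff, pp_monic.leadingCoeff]
      norm_num

lemma coeff3_symm {n s : ℕ} (h : s ≤ 2 * n) : coeff3 n s = coeff3 n (2 * n - s) := by
  simp only [coeff3_def]
  conv_lhs => rw [← ppn_reverse n]
  rw [Polynomial.coeff_reverse, ppn_natDegree, Polynomial.revAt_le h]


lemma pp_coeff_ge {j : ℕ} (h : 2 < j) : pp.coeff j = 0 := by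
  apply Polynomial.coeff_eq_zero_of_natDegree_lt; rw [pp_natDegree]; exact h

lemma coeff_mul_mono {P Q R S : Polynomial ℕ} (h1 : ∀ j, P.coeff j ≤ Q.coeff j)
    (h2 : ∀ j, R.coeff j ≤ S.coeff j) (i : ℕ) : (P * R).coeff i ≤ (Q * S).coeff i := by
  rw [Polynomial.coeff_mul, Polynomial.coeff_mul]
  exact Finset.sum_le_sum fun x _ => Nat.mul_le_mul (h1 x.1) (h2 x.2)

lemma coeff_pow_mono {P Q : Polynomial ℕ} (h : ∀ j, P.coeff j ≤ Q.coeff j) (n : ℕ) :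
    ∀ i, (P ^ n).coeff i ≤ (Q ^ n).coeff i := by
  induction n with
  | zero => simp
  | succ n ih =>
      intro i
      rw [pow_succ, pow_succ]
      exact coeff_mul_mono ih h i

-- coefficients of 1 + X
lemma oneX_coeff (j : ℕ) : (1 + X : Polynomial ℕ).coeff j ≤ pp.coeff j := by
  rcases j with _ | _ | _ | j
  · rw [pp_coeff_zero]; simp
  · rw [pp_coeff_one]; simp [Polynomial.coeff_one]
  · rw [pp_coeff_two]; simp [Polynomial.coeff_one, Polynomial.coeff_X]
  · simp [Polynomial.coeff_one, Polynomial.coeff_X]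

lemma pp_le_sq (j : ℕ) : pp.coeff j ≤ ((1 + X : Polynomial ℕ) ^ 2).coeff j := by
  have hsq : ((1 + X : Polynomial ℕ) ^ 2) = 1 + X * 2 + X ^ 2 := by ring
  rw [hsq]
  rcases j with _ | _ | _ | j
  · rw [pp_coeff_zero]; simp
  · rw [pp_coeff_one]; simp [Polynomial.coeff_one, Polynomial.coeff_X]
  · rw [pp_coeff_two]; simp [Polynomial.coeff_one, Polynomial.coeff_X]
  · rw [pp_coeff_ge (by omega)]; exact Nat.zero_le _

lemma choose_le_coeff3 (n t : ℕ) : n.choose t ≤ coeff3 n t := by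
  have h := coeff_pow_mono oneX_coeff n t
  rwa [Polynomial.coeff_one_add_X_pow ℕ n t] at h

lemma coeff3_le_choose (n i : ℕ) : coeff3 n i ≤ (2 * n).choose i := by
  have h := coeff_pow_mono pp_le_sq n i
  rwa [← pow_mul, mul_comm 2 n, Polynomial.coeff_one_add_X_pow ℕ (n*2) i, mul_comm n 2] at h

-- choose monotone in k below half
lemma choose_mono_k {N a b : ℕ} (hab : a ≤ b) (hb : 2 * b ≤ N) : N.choose a ≤ N.choose b := by
  induction b with
  | zero =>
      have : a = 0 := by omega
      simp [this]
  | succ m ih =>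
      rcases Nat.lt_or_ge a (m+1) with h | h
      · have : N.choose a ≤ N.choose m := ih (by omega) (by omega)
        apply this.trans
        apply Nat.choose_le_succ_of_lt_half_left
        omega
      · have : a = m + 1 := by omega
        rw [this]

-- descFactorial lower bound: (n - k + 1)^k ≤ descFactorial... we need (n-24)^t ≤ n.choose t * t !
lemma desc_lower {n t c : ℕ} (h : t ≤ c + 1) (hc : c ≤ n) : (n - c) ^ t ≤ n.descFactorial t := by
  induction t with
  | zero => simp
  | succ m ih =>
      rw [Nat.descFactorial_succ, pow_succ]
      have h1 : (n - c) ^ m ≤ n.descFactorial m := ih (by omega)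
      have h2 : n - c ≤ n - m := by omega
      calc (n-c)^m * (n-c) ≤ n.descFactorial m * (n - m) := Nat.mul_le_mul h1 h2
      _ = (n - m) * n.descFactorial m := by ring
      _ = n.descFactorial (m+1) := (Nat.descFactorial_succ n m).symm

lemma choose_ge_div {n t c : ℕ} (h : t ≤ c + 1) (hc : c ≤ n) :
    (n - c) ^ t ≤ Nat.factorial t * n.choose t := by
  rw [← Nat.descFactorial_eq_factorial_mul_choose]
  exact desc_lower h hc


-- digit extraction
lemma digit_extract (B : ℕ) (hB : 1 < B) :
    ∀ (K : ℕ) (c : ℕ → ℕ), (∀ i, i < K → c i < B) → ∀ d, d < K →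
      (∑ i ∈ Finset.range K, c i * B ^ i) / B ^ d % B = c d := by
  intro K
  induction K with
  | zero => intro c _ d hd; omega
  | succ K ih =>
      intro c hc d hd
      have hsum : (∑ i ∈ Finset.range (K+1), c i * B ^ i)
          = c 0 + B * (∑ i ∈ Finset.range K, c (i+1) * B ^ i) := by
        rw [Finset.sum_range_succ' (fun i => c i * B ^ i)]
        rw [Finset.mul_sum]
        simp only [pow_succ]
        rw [add_comm, pow_zero, mul_one]
        congr 1
        apply Finset.sum_congr rfl
        intro x _
        ring
      rcases d with _ | d
      · rw [hsum]
        simp only [pow_zero, Nat.div_one]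
        rw [Nat.add_mul_mod_self_left, Nat.mod_eq_of_lt (hc 0 (by omega))]
      · rw [hsum, pow_succ']
        rw [← Nat.div_div_eq_div_mul]
        have h0 : (c 0 + B * ∑ i ∈ Finset.range K, c (i+1) * B ^ i) / B
            = ∑ i ∈ Finset.range K, c (i+1) * B ^ i := by
          rw [Nat.add_mul_div_left _ _ (by omega : 0 < B),
            Nat.div_eq_of_lt (hc 0 (by omega))]
          omega
        rw [h0]
        exact ih (fun i => c (i+1)) (fun i hi => hc (i+1) (by omega)) d (by omega)


lemma nine_step {N j : ℕ} (h : 9 * (j + 1) ≤ N - j) :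
    9 * N.choose j ≤ N.choose (j + 1) := by
  have key : N.choose (j+1) * (j+1) = N.choose j * (N - j) := Nat.choose_succ_right_eq N j
  have h2 : 9 * N.choose j * (j + 1) ≤ N.choose (j+1) * (j+1) := by
    rw [key]
    calc 9 * N.choose j * (j+1) = N.choose j * (9 * (j+1)) := by ring
    _ ≤ N.choose j * (N - j) := Nat.mul_le_mul_left _ h
  exact Nat.le_of_mul_le_mul_right h2 (by omega)

lemma nine_chain (N : ℕ) : ∀ (d m : ℕ), 10 * (m + d) ≤ N + 1 →
    N.choose m * 9 ^ d ≤ N.choose (m + d) := by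
  intro d
  induction d with
  | zero => simp
  | succ e ih =>
      intro m hme
      have h1 : N.choose m * 9 ^ e ≤ N.choose (m + e) := ih m (by omega)
      have h2 : 9 * N.choose (m + e) ≤ N.choose (m + e + 1) := nine_step (by omega)
      calc N.choose m * 9 ^ (e+1) = 9 * (N.choose m * 9 ^ e) := by ring
      _ ≤ 9 * N.choose (m + e) := by omega
      _ ≤ N.choose (m + e + 1) := h2
      _ = N.choose (m + (e+1)) := by ring_nf

lemma five_chain (n : ℕ) : ∀ t, 3 * t ≤ n → 2 ^ t * ((2*n).choose t) ≤ 5 ^ t * (n.choose t) := by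
  intro t
  induction t with
  | zero => simp
  | succ m ih =>
      intro h3
      have hIH := ih (by omega)
      have key1 : (2*n).choose (m+1) * (m+1) = (2*n).choose m * (2*n - m) :=
        Nat.choose_succ_right_eq (2*n) m
      have key2 : n.choose (m+1) * (m+1) = n.choose m * (n - m) :=
        Nat.choose_succ_right_eq n m
      have hstep : 2 * (2*n - m) ≤ 5 * (n - m) := by omega
      have main : 2 ^ (m+1) * ((2*n).choose (m+1)) * (m+1) ≤ 5 ^ (m+1) * (n.choose (m+1)) * (m+1) := by
        calc 2 ^ (m+1) * ((2*n).choose (m+1)) * (m+1)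
            = (2 ^ m * (2*n).choose m) * (2 * (2*n - m)) := by
              rw [mul_assoc, key1]; ring
        _ ≤ (5 ^ m * n.choose m) * (5 * (n - m)) :=
              Nat.mul_le_mul hIH hstep
        _ = 5 ^ (m+1) * (n.choose (m+1)) * (m+1) := by
              rw [mul_assoc (5^(m+1)), key2]; ring
      exact Nat.le_of_mul_le_mul_right main (by omega)

lemma six_gt : ∀ t, 26 ≤ t → (t + 2) * 5 ^ t < 2 * 6 ^ t := by
  intro t
  induction t with
  | zero => omega
  | succ m ih =>
      intro h
      rcases Nat.lt_or_ge m 26 with h26 | h26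
      · have : m = 25 := by omega
        subst this
        norm_num
      · have hIH := ih h26
        have step1 : (m + 1 + 2) * 5 ^ (m+1) ≤ (6 * (m + 2)) * 5 ^ m := by
          have : (m + 3) * 5 ≤ 6 * (m + 2) := by omega
          calc (m + 1 + 2) * 5 ^ (m+1) = ((m+3) * 5) * 5 ^ m := by ring
          _ ≤ (6 * (m + 2)) * 5 ^ m := Nat.mul_le_mul_right _ this
        have step2 : (6 * (m+2)) * 5 ^ m < 6 * (2 * 6 ^ m) := by
          calc (6 * (m+2)) * 5^m = 6 * ((m+2) * 5^m) := by ring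
          _ < 6 * (2 * 6^m) := mul_lt_mul_of_pos_left hIH (by norm_num)
        calc (m + 1 + 2) * 5 ^ (m+1) ≤ (6 * (m + 2)) * 5 ^ m := step1
        _ < 6 * (2 * 6 ^ m) := step2
        _ = 2 * 6 ^ (m+1) := by ring

-- Regime A2 : 26 ≤ t, 5t ≤ n
lemma regimeA2 {n t : ℕ} (h26 : 26 ≤ t) (h5 : 5 * t ≤ n) :
    ∑ i ∈ Finset.range (t/2 + 1), coeff3 n i < coeff3 n t := by
  set m := t / 2 with hm
  have hmn : 2 * m ≤ 2 * n := by omega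
  have hS : ∑ i ∈ Finset.range (m + 1), coeff3 n i ≤ (m + 1) * ((2*n).choose m) := by
    calc ∑ i ∈ Finset.range (m + 1), coeff3 n i
        ≤ ∑ _i ∈ Finset.range (m + 1), (2*n).choose m :=
          Finset.sum_le_sum fun i hi => (coeff3_le_choose n i).trans
            (choose_mono_k (by have := Finset.mem_range.mp hi; omega) hmn)
    _ = (m + 1) * ((2*n).choose m) := by
          rw [Finset.sum_const, Finset.card_range, smul_eq_mul]
  have h9 : (2*n).choose m * 9 ^ (t - m) ≤ (2*n).choose t := by
    have := nine_chain (2*n) (t - m) m (by omega)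
    rwa [show m + (t - m) = t by omega] at this
  have h25 : 2 ^ t * ((2*n).choose t) ≤ 5 ^ t * (n.choose t) := five_chain n t (by omega)
  have h3 : (3:ℕ) ^ t ≤ 9 ^ (t - m) := by
    calc (3:ℕ)^t ≤ 3 ^ (2 * (t - m)) := Nat.pow_le_pow_right (by norm_num) (by omega)
    _ = 9 ^ (t - m) := by rw [pow_mul]; norm_num
  have hCpos : 0 < n.choose t := Nat.choose_pos (by omega)
  have h6 : (m + 1) * 5 ^ t < 2 ^ t * 9 ^ (t - m) := by
    have h1 : (t + 2) * 5 ^ t < 2 * 6 ^ t := six_gt t h26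
    have h2 : 2 * ((m + 1) * 5 ^ t) ≤ (t + 2) * 5 ^ t := by
      have e : 2 * ((m + 1) * 5 ^ t) = ((m+1)*2) * 5 ^ t := by ring
      rw [e]
      exact Nat.mul_le_mul_right _ (by omega)
    have h4 : 2 * 6 ^ t = 2 * (2 ^ t * 3 ^ t) := by rw [← mul_pow]; norm_num
    have h5' : 2 ^ t * 3 ^ t ≤ 2 ^ t * 9 ^ (t - m) := Nat.mul_le_mul_left _ h3
    omega
  -- combine: S * (2^t * 9^(t-m)) < choose n t * (2^t * 9^(t-m))
  have main : (∑ i ∈ Finset.range (m + 1), coeff3 n i) * (2 ^ t * 9 ^ (t - m))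
      < (n.choose t) * (2 ^ t * 9 ^ (t - m)) := by
    calc (∑ i ∈ Finset.range (m + 1), coeff3 n i) * (2 ^ t * 9 ^ (t - m))
        ≤ ((m + 1) * ((2*n).choose m)) * (2 ^ t * 9 ^ (t - m)) :=
          Nat.mul_le_mul_right _ hS
    _ = ((m+1) * 2 ^ t) * ((2*n).choose m * 9 ^ (t-m)) := by ring
    _ ≤ ((m+1) * 2 ^ t) * ((2*n).choose t) := Nat.mul_le_mul_left _ h9
    _ = (m+1) * (2 ^ t * ((2*n).choose t)) := by ring
    _ ≤ (m+1) * (5 ^ t * (n.choose t)) := Nat.mul_le_mul_left _ h25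
    _ = ((m+1) * 5 ^ t) * (n.choose t) := by ring
    _ < (2 ^ t * 9 ^ (t-m)) * (n.choose t) := by
          exact Nat.mul_lt_mul_of_lt_of_le h6 (le_refl _) hCpos
    _ = (n.choose t) * (2 ^ t * 9 ^ (t - m)) := by ring
  have hfin : ∑ i ∈ Finset.range (m + 1), coeff3 n i < n.choose t :=
    Nat.lt_of_mul_lt_mul_right main
  exact hfin.trans_le (choose_le_coeff3 n t)

-- Regime A1 : 1 ≤ t ≤ 25, n huge
lemma regimeA1 {n t : ℕ} (ht : 1 ≤ t) (h25 : t ≤ 25) (hn : 10 ^ 30 ≤ n) :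
    ∑ i ∈ Finset.range (t/2 + 1), coeff3 n i < coeff3 n t := by
  rcases Nat.eq_or_lt_of_le ht with h1 | h2
  · -- t = 1
    rw [← h1]
    norm_num [coeff3_zero]
    calc (1:ℕ) < n := by omega
    _ = n.choose 1 := (Nat.choose_one_right n).symm
    _ ≤ coeff3 n 1 := choose_le_coeff3 n 1
  · -- 2 ≤ t
    set m := t / 2 with hm
    have hm1 : 1 ≤ m := by omega
    have hm12 : m ≤ 12 := by omega
    have hS : ∑ i ∈ Finset.range (m + 1), coeff3 n i ≤ (m + 1) * (2*n) ^ m := by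
      calc ∑ i ∈ Finset.range (m + 1), coeff3 n i
          ≤ ∑ _i ∈ Finset.range (m + 1), (2*n) ^ m := by
            apply Finset.sum_le_sum
            intro i hi
            calc coeff3 n i ≤ (2*n).choose i := coeff3_le_choose n i
            _ ≤ (2*n) ^ i := Nat.choose_le_pow _ _
            _ ≤ (2*n) ^ m := Nat.pow_le_pow_right (by omega)
                (by have := Finset.mem_range.mp hi; omega)
      _ = (m + 1) * (2*n) ^ m := by rw [Finset.sum_const, Finset.card_range, smul_eq_mul]
    -- key numeric: (m+1) * (2n)^m * 25! < (n-24)^t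
    have hKn : (m + 1) * (2*n) ^ m * Nat.factorial 25 < (n - 24) ^ t := by
      have e1 : (13 * Nat.factorial 25) * (2 * n) < (n - 24) ^ 2 := by
        have h13 : (13 * Nat.factorial 25) * 2 + 49 ≤ n := by
          have : 13 * Nat.factorial 25 * 2 + 49 ≤ 10 ^ 30 := by norm_num [Nat.factorial]
          omega
        have h24 : (24:ℕ) ≤ n := by omega
        zify [h24]
        nlinarith [h13]
      have e2 : ((13 * Nat.factorial 25) * (2*n)) ^ m < ((n - 24) ^ 2) ^ m ∨ m = 0 := by
        left
        exact Nat.pow_lt_pow_left e1 (by omega)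
      rcases e2 with e2 | e2
      swap
      · omega
      have e3 : (m + 1) * (2*n)^m * Nat.factorial 25 ≤ ((13 * Nat.factorial 25) * (2*n))^m := by
        have hbig : 1 ≤ 13 * Nat.factorial 25 :=
          Nat.one_le_iff_ne_zero.mpr (Nat.mul_ne_zero (by norm_num) (Nat.factorial_ne_zero 25))
        have hmf : (m+1) * Nat.factorial 25 ≤ 13 * Nat.factorial 25 :=
          Nat.mul_le_mul_right _ (by omega)
        calc (m + 1) * (2*n)^m * Nat.factorial 25
            = ((m+1) * Nat.factorial 25) * (2*n)^m := by ring
        _ ≤ (13 * Nat.factorial 25) * (2*n)^m := Nat.mul_le_mul_right _ hmf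
        _ ≤ (13 * Nat.factorial 25) ^ m * (2*n)^m := by
              apply Nat.mul_le_mul_right
              exact Nat.le_self_pow (by omega) _
        _ = ((13 * Nat.factorial 25) * (2*n))^m := (mul_pow _ _ _).symm
      have e4 : ((n-24)^2)^m ≤ (n-24)^t := by
        rw [← pow_mul]
        apply Nat.pow_le_pow_right (by omega)
        omega
      omega
    -- conclude
    have hdesc : (n - 24) ^ t ≤ Nat.factorial t * n.choose t :=
      choose_ge_div (by omega) (by omega)
    have hfact : Nat.factorial t ≤ Nat.factorial 25 := Nat.factorial_le h25
    have main : (∑ i ∈ Finset.range (m + 1), coeff3 n i) * Nat.factorial t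
        < (n.choose t) * Nat.factorial t := by
      calc (∑ i ∈ Finset.range (m + 1), coeff3 n i) * Nat.factorial t
          ≤ ((m+1) * (2*n)^m) * Nat.factorial 25 := Nat.mul_le_mul hS hfact
      _ < (n - 24) ^ t := hKn
      _ ≤ Nat.factorial t * n.choose t := hdesc
      _ = (n.choose t) * Nat.factorial t := by ring
    have hfin : ∑ i ∈ Finset.range (m + 1), coeff3 n i < n.choose t :=
      Nat.lt_of_mul_lt_mul_right main
    exact hfin.trans_le (choose_le_coeff3 n t)


-- blocks
lemma blocks_pow (r j : ℕ) : ∀ u, (coeff3 r j) ^ u ≤ coeff3 (r * u) (j * u) := by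
  intro u
  induction u with
  | zero => simp [coeff3_zero]
  | succ v ih =>
      calc (coeff3 r j)^(v+1) = (coeff3 r j)^v * coeff3 r j := by ring
      _ ≤ coeff3 (r*v) (j*v) * coeff3 r j := Nat.mul_le_mul_right _ ih
      _ ≤ coeff3 (r*v + r) (j*v + j) := coeff3_superadd _ _ _ _
      _ = coeff3 (r*(v+1)) (j*(v+1)) := by ring_nf

lemma blocks_two (u v w d : ℕ) :
    (coeff3 40 d) ^ u * (coeff3 40 (d+1)) ^ v ≤ coeff3 (40*u + 40*v + w) (d*u + (d+1)*v) := by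
  calc (coeff3 40 d) ^ u * (coeff3 40 (d+1)) ^ v
      ≤ coeff3 (40*u) (d*u) * coeff3 (40*(v)) ((d+1)*v) :=
        Nat.mul_le_mul (blocks_pow _ _ _) (blocks_pow _ _ _)
  _ ≤ coeff3 (40*u + 40*v) (d*u + (d+1)*v) := coeff3_superadd _ _ _ _
  _ = coeff3 (40*u + 40*v) (d*u + (d+1)*v) * coeff3 w 0 := by rw [coeff3_zero, mul_one]
  _ ≤ coeff3 (40*u + 40*v + w) (d*u + (d+1)*v + 0) := coeff3_superadd _ _ _ _
  _ = coeff3 (40*u + 40*v + w) (d*u + (d+1)*v) := by rw [Nat.add_zero]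

-- Chernoff upper bound over ℚ
lemma chernoff (n m : ℕ) (hm : m ≤ 2 * n) (x : ℚ) (hx : 0 < x) (hx1 : x ≤ 1) :
    (∑ i ∈ Finset.range (m+1), (coeff3 n i : ℚ)) * x ^ m ≤ (1 + x + x^2) ^ n := by
  have hmap : ∀ i, ((pp ^ n).map (Nat.castRingHom ℚ)).coeff i = ((coeff3 n i : ℕ) : ℚ) := by
    intro i
    rw [Polynomial.coeff_map, coeff3_def]
    rfl
  have hdeg : ((pp ^ n).map (Nat.castRingHom ℚ)).natDegree < 2*n + 1 :=
    lt_of_le_of_lt (Polynomial.natDegree_map_le) (by rw [ppn_natDegree]; omega)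
  have heval := Polynomial.eval_eq_sum_range' hdeg x
  have hppmap : (pp.map (Nat.castRingHom ℚ)) = 1 + X + X^2 := by
    unfold pp
    simp [Polynomial.map_add, Polynomial.map_one, Polynomial.map_pow]
  have heval2 : ((pp ^ n).map (Nat.castRingHom ℚ)).eval x = (1 + x + x^2)^n := by
    rw [Polynomial.map_pow, Polynomial.eval_pow, hppmap]
    simp
  have hsum : (1 + x + x^2)^n = ∑ i ∈ Finset.range (2*n+1), (coeff3 n i : ℚ) * x ^ i := by
    rw [← heval2, heval]
    exact Finset.sum_congr rfl fun i _ => by rw [hmap]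
  calc (∑ i ∈ Finset.range (m+1), (coeff3 n i : ℚ)) * x ^ m
      = ∑ i ∈ Finset.range (m+1), (coeff3 n i : ℚ) * x ^ m := by rw [Finset.sum_mul]
  _ ≤ ∑ i ∈ Finset.range (m+1), (coeff3 n i : ℚ) * x ^ i := by
      apply Finset.sum_le_sum
      intro i hi
      have hile : i ≤ m := by have := Finset.mem_range.mp hi; omega
      have : x ^ m ≤ x ^ i := pow_le_pow_of_le_one hx.le hx1 hile
      have hnn : (0:ℚ) ≤ (coeff3 n i : ℚ) := by positivity
      exact mul_le_mul_of_nonneg_left this hnn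
  _ ≤ ∑ i ∈ Finset.range (2*n+1), (coeff3 n i : ℚ) * x ^ i := by
      apply Finset.sum_le_sum_of_subset_of_nonneg
      · exact Finset.range_subset_range.mpr (by omega)
      · intro i _ _
        positivity
  _ = (1 + x + x^2)^n := hsum.symm

-- 101^n ≥ 2^(n/70) * 100^n
lemma pow101 (n : ℕ) : 2 ^ (n / 70) * 100 ^ n ≤ 101 ^ n := by
  have h70 : (2:ℕ) * 100 ^ 70 ≤ 101 ^ 70 := by norm_num
  have hn : n = 70 * (n / 70) + n % 70 := (Nat.div_add_mod n 70).symm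
  set u := n / 70
  set v := n % 70
  calc 2 ^ u * 100 ^ n = 2 ^ u * (100 ^ (70 * u) * 100 ^ v) := by rw [hn, pow_add]
  _ = (2 * 100 ^ 70) ^ u * 100 ^ v := by rw [mul_pow, ← pow_mul]; ring
  _ ≤ (101 ^ 70) ^ u * 101 ^ v :=
      Nat.mul_le_mul (Nat.pow_le_pow_left h70 u) (Nat.pow_le_pow_left (by norm_num) v)
  _ = 101 ^ (70 * u + v) := by rw [← pow_mul, ← pow_add]
  _ = 101 ^ n := by rw [← hn]

lemma w39_lt (n W : ℕ) (hW : W ≤ 3 ^ 40) (hn : 10 ^ 30 ≤ n) :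
    100 ^ n * W ^ 39 < 101 ^ n := by
  have h1 : W ^ 39 ≤ (3 ^ 40) ^ 39 := Nat.pow_le_pow_left hW 39
  have h2 : (3:ℕ) ^ 1560 < 2 ^ 2473 := by
    set_option exponentiation.threshold 5000 in norm_num
  have h3 : (2473 : ℕ) ≤ n / 70 := by omega
  have h4 : (2:ℕ) ^ 2473 ≤ 2 ^ (n / 70) := Nat.pow_le_pow_right (by norm_num) h3
  have h5 : W ^ 39 < 2 ^ (n / 70) := by
    calc W ^ 39 ≤ (3 ^ 40) ^ 39 := h1
    _ = 3 ^ 1560 := by set_option exponentiation.threshold 5000 in norm_num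
    _ < 2 ^ 2473 := h2
    _ ≤ 2 ^ (n / 70) := h4
  calc 100 ^ n * W ^ 39 < 100 ^ n * 2 ^ (n / 70) := by
        have hp : 0 < (100:ℕ) ^ n := Nat.pow_pos (by norm_num)
        exact mul_lt_mul_of_pos_left h5 hp
  _ = 2 ^ (n / 70) * 100 ^ n := by ring
  _ ≤ 101 ^ n := pow101 n


def BB : ℕ := 12157665459056928802
def Wf (d : ℕ) : ℕ := (1 + BB + BB ^ 2) ^ 40 / BB ^ d % BB

lemma coeff3_40 (d : ℕ) (hd : d < 81) : coeff3 40 d = Wf d := by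
  have hB : 1 < BB := by norm_num [BB]
  have hlt : ∀ i, i < 81 → coeff3 40 i < BB := by
    intro i _
    have := coeff3_le_pow 40 i
    have h3 : (3:ℕ)^40 < BB := by norm_num [BB]
    omega
  have h := digit_extract BB hB 81 (coeff3 40) hlt d hd
  have hev : (1 + BB + BB ^ 2) ^ 40 = ∑ i ∈ Finset.range 81, coeff3 40 i * BB ^ i := by
    have := eval_identity 40 BB
    norm_num at this ⊢
    convert this using 2
  rw [Wf, hev, h]


lemma regimeB (a b k W n t : ℕ) (ha : 0 < a) (hab : a < b) (hk1 : 1 ≤ k)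
    (hWmin : ∀ d, 2*k ≤ d → d ≤ 41 → W ≤ coeff3 40 d)
    (hWle : W ≤ 3 ^ 40) (hWpos : 0 < W)
    (hnum : 101 * ((b^2 + a*b + a^2) ^ 40 * b ^ (k+1)) ≤ 100 * (W * (a ^ (k+1) * b ^ 80)))
    (hn : 10 ^ 30 ≤ n) (htn : t < n) (hkt : k * n ≤ 20 * t) (htk : 20 * t < (k+1) * n) :
    ∑ i ∈ Finset.range (t/2 + 1), coeff3 n i < coeff3 n t := by
  have htpos : 0 < t := by
    rcases Nat.eq_zero_or_pos t with h0 | h; swap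
    · exact h
    · exfalso; rw [h0] at hkt; simp at hkt
      have : 1 * n ≤ k * n := Nat.mul_le_mul_right n hk1
      omega
  -- block decomposition
  set q := n / 40 with hq
  have hq40 : 40 * q ≤ n := by omega
  have hq41 : n < 40 * q + 40 := by omega
  have hqbig : 100 ≤ q := by omega
  set d := t / q with hd
  set r := t % q with hr
  have hrq : r < q := Nat.mod_lt _ (by omega)
  have htdq : q * d + r = t := Nat.div_add_mod t q
  have hd2k : 2 * k ≤ d := by
    rw [hd, Nat.le_div_iff_mul_le (by omega : 0 < q)]
    have h1 : 40 * (k * q) ≤ k * n := by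
      calc 40 * (k * q) = k * (40 * q) := by ring
      _ ≤ k * n := Nat.mul_le_mul_left k hq40
    have h2 : 2 * k * q = 2 * (k * q) := by ring
    omega
  have hd40 : d ≤ 40 := by
    have h41 : t / q < 41 := (Nat.div_lt_iff_lt_mul (by omega : 0 < q)).mpr (by omega)
    omega
  -- lower bound on coeff3 n t
  have hblocks : W ^ q ≤ coeff3 n t := by
    have h1 : W ^ q = W ^ (q - r) * W ^ r := by rw [← pow_add]; congr 1; omega
    have h2 : W ^ (q - r) * W ^ r ≤ (coeff3 40 d) ^ (q - r) * (coeff3 40 (d+1)) ^ r :=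
      Nat.mul_le_mul (Nat.pow_le_pow_left (hWmin d hd2k (by omega)) _)
        (Nat.pow_le_pow_left (hWmin (d+1) (by omega) (by omega)) _)
    have h3 := blocks_two (q - r) r (n - 40 * q) d
    have e1 : 40 * (q - r) + 40 * r + (n - 40 * q) = n := by omega
    have e2 : d * (q - r) + (d + 1) * r = t := by
      have h := htdq
      zify [hrq.le] at h ⊢
      linear_combination h
    rw [e1, e2] at h3
    calc W ^ q = W ^ (q-r) * W ^ r := h1
    _ ≤ (coeff3 40 d) ^ (q - r) * (coeff3 40 (d+1)) ^ r := h2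
    _ ≤ coeff3 n t := h3
  -- Chernoff side
  set m := t / 2 with hm
  set x : ℚ := (a : ℚ) / (b : ℚ) with hx
  have hb0 : (0:ℚ) < (b:ℚ) := by exact_mod_cast (by omega : 0 < b)
  have ha0 : (0:ℚ) < (a:ℚ) := by exact_mod_cast ha
  have hxpos : 0 < x := by rw [hx]; exact div_pos ha0 hb0
  have hx1 : x ≤ 1 := by
    rw [hx, div_le_one hb0]
    exact_mod_cast hab.le
  have hcher := chernoff n m (by omega) x hxpos hx1
  set S : ℚ := ∑ i ∈ Finset.range (m+1), (coeff3 n i : ℚ) with hS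
  have hSnn : 0 ≤ S := by rw [hS]; positivity
  set P : ℚ := 1 + x + x^2 with hP
  have hPpos : 0 < P := by rw [hP]; nlinarith [hxpos, sq_nonneg x]
  have h40 : S ^ 40 * x ^ (40 * m) ≤ P ^ (40 * n) := by
    have hstep := pow_le_pow_left₀ (mul_nonneg hSnn (pow_nonneg hxpos.le m)) hcher 40
    calc S ^ 40 * x ^ (40*m) = (S * x ^ m) ^ 40 := by rw [mul_pow, ← pow_mul, mul_comm m 40]
    _ ≤ (P ^ n) ^ 40 := hstep
    _ = P ^ (40 * n) := by rw [← pow_mul, mul_comm n 40]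
  have hexp : 40 * m ≤ (k+1) * n := by omega
  have hxm : x ^ ((k+1) * n) ≤ x ^ (40 * m) := pow_le_pow_of_le_one hxpos.le hx1 hexp
  have hkey : S ^ 40 * x ^ ((k+1) * n) ≤ P ^ (40 * n) := by
    calc S ^ 40 * x ^ ((k+1)*n) ≤ S ^ 40 * x ^ (40*m) := by
          apply mul_le_mul_of_nonneg_left hxm
          exact pow_nonneg hSnn 40
    _ ≤ P ^ (40*n) := h40
  -- numeric inequality in ℚ : 101 * P^40 ≤ 100 * W * x^(k+1)
  have hnumQ : 101 * P ^ 40 ≤ 100 * (W : ℚ) * x ^ (k+1) := by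
    have hbpos : (0:ℚ) < (b:ℚ) ^ (80 + (k+1)) := pow_pos hb0 _
    apply le_of_mul_le_mul_right _ hbpos
    have hPQ : P * (b:ℚ) ^ 2 = ((b^2 + a*b + a^2 : ℕ) : ℚ) := by
      rw [hP, hx]
      push_cast
      field_simp
    have hxa : x * (b:ℚ) = (a:ℚ) := by
      rw [hx]; field_simp
    have hP40 : P ^ 40 * (b:ℚ) ^ 80 = ((b^2 + a*b + a^2 : ℕ) : ℚ) ^ 40 := by
      calc P ^ 40 * (b:ℚ) ^ 80 = (P * (b:ℚ)^2) ^ 40 := by rw [mul_pow, ← pow_mul]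
      _ = ((b^2 + a*b + a^2 : ℕ) : ℚ) ^ 40 := by rw [hPQ]
    have hxk : x ^ (k+1) * (b:ℚ) ^ (k+1) = ((a:ℚ)) ^ (k+1) := by
      rw [← mul_pow, hxa]
    have hcast : (101:ℚ) * ((b^2 + a*b + a^2 : ℕ):ℚ) ^ 40 * (b:ℚ) ^ (k+1)
        ≤ 100 * (W:ℚ) * ((a:ℚ) ^ (k+1) * (b:ℚ) ^ 80) := by
      have hcast2 : ((101 * ((b^2 + a*b + a^2) ^ 40 * b ^ (k+1)) : ℕ) : ℚ)
          ≤ ((100 * (W * (a ^ (k+1) * b ^ 80)) : ℕ) : ℚ) := by exact_mod_cast hnum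
      push_cast at hcast2 ⊢
      linear_combination hcast2
    calc 101 * P ^ 40 * (b:ℚ) ^ (80 + (k+1))
        = 101 * (P ^ 40 * (b:ℚ)^80) * (b:ℚ)^(k+1) := by rw [pow_add]; ring
    _ = 101 * ((b^2 + a*b + a^2 : ℕ):ℚ) ^ 40 * (b:ℚ)^(k+1) := by rw [hP40]
    _ ≤ 100 * (W:ℚ) * ((a:ℚ) ^ (k+1) * (b:ℚ) ^ 80) := hcast
    _ = 100 * (W:ℚ) * ((x ^ (k+1) * (b:ℚ)^(k+1)) * (b:ℚ) ^ 80) := by rw [hxk]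
    _ = 100 * (W:ℚ) * x ^ (k+1) * (b:ℚ) ^ (80 + (k+1)) := by rw [pow_add]; ring
  -- raise to n-th power and combine
  have hWQpos : (0:ℚ) < (W:ℚ) := by exact_mod_cast hWpos
  have hpown : (101 * P ^ 40) ^ n ≤ (100 * (W:ℚ) * x ^ (k+1)) ^ n :=
    pow_le_pow_left₀ (by positivity) hnumQ n
  have hexpand : (101:ℚ) ^ n * P ^ (40 * n) ≤ 100 ^ n * (W:ℚ) ^ n * x ^ ((k+1) * n) := by
    calc (101:ℚ) ^ n * P ^ (40 * n) = (101 * P ^ 40) ^ n := by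
          rw [mul_pow, ← pow_mul]
    _ ≤ (100 * (W:ℚ) * x ^ (k+1)) ^ n := hpown
    _ = 100 ^ n * (W:ℚ) ^ n * x ^ ((k+1) * n) := by
          rw [mul_pow, mul_pow, ← pow_mul]
  have hW39Q : (100:ℚ) ^ n * (W:ℚ) ^ 39 < 101 ^ n := by
    exact_mod_cast w39_lt n W hWle hn
  have hn39 : 39 ≤ n := by omega
  have hWsplit : (W:ℚ) ^ n = (W:ℚ) ^ 39 * (W:ℚ) ^ (n - 39) := by
    rw [← pow_add]; congr 1; omega
  have hmain : P ^ (40 * n) < (W:ℚ) ^ (n - 39) * x ^ ((k+1) * n) := by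
    have hnn : (0:ℚ) < 100 ^ n * (W:ℚ) ^ 39 :=
      mul_pos (pow_pos (by norm_num) n) (pow_pos hWQpos 39)
    apply lt_of_mul_lt_mul_left _ hnn.le
    calc (100 ^ n * (W:ℚ) ^ 39) * P ^ (40 * n)
        < 101 ^ n * P ^ (40 * n) := by
          exact mul_lt_mul_of_pos_right hW39Q (pow_pos hPpos _)
    _ ≤ 100 ^ n * (W:ℚ) ^ n * x ^ ((k+1)*n) := hexpand
    _ = (100 ^ n * (W:ℚ) ^ 39) * ((W:ℚ) ^ (n-39) * x ^ ((k+1)*n)) := by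
          rw [hWsplit]; ring
  -- F bound
  set F : ℚ := (coeff3 n t : ℚ) with hF
  have hFW : (W:ℚ) ^ (n - 39) ≤ F ^ 40 := by
    have h1 : (W:ℚ) ^ q ≤ F := by
      rw [hF]
      exact_mod_cast hblocks
    have h2 : (W:ℚ) ^ (n - 39) ≤ ((W:ℚ) ^ q) ^ 40 := by
      rw [← pow_mul]
      apply pow_le_pow_right₀ (by exact_mod_cast hWpos)
      omega
    calc (W:ℚ) ^ (n-39) ≤ ((W:ℚ)^q)^40 := h2
    _ ≤ F ^ 40 := pow_le_pow_left₀ (by positivity) h1 40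
  have hfinal : S ^ 40 < F ^ 40 := by
    have hxE : (0:ℚ) < x ^ ((k+1) * n) := pow_pos hxpos _
    have c1 : S ^ 40 * x ^ ((k+1)*n) < F ^ 40 * x ^ ((k+1)*n) := by
      calc S ^ 40 * x ^ ((k+1)*n) ≤ P ^ (40*n) := hkey
      _ < (W:ℚ) ^ (n-39) * x ^ ((k+1)*n) := hmain
      _ ≤ F ^ 40 * x ^ ((k+1)*n) := by
          apply mul_le_mul_of_nonneg_right hFW hxE.le
    exact lt_of_mul_lt_mul_right c1 hxE.le
  have hSF : S < F := by
    by_contra hcon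
    push_neg at hcon
    have : F ^ 40 ≤ S ^ 40 := pow_le_pow_left₀ (by positivity) hcon 40
    linarith
  rw [hS, hF] at hSF
  exact_mod_cast hSF


lemma regimeB' (a b k : ℕ) (ha : 0 < a) (hab : a < b) (hk1 : 1 ≤ k)
    (hmin : ∀ d, d < 42 → 2*k ≤ d → Wf (2*k) ≤ Wf d)
    (hWle : Wf (2*k) ≤ 3 ^ 40) (hWpos : 0 < Wf (2*k))
    (hnum : 101 * ((b^2 + a*b + a^2) ^ 40 * b ^ (k+1)) ≤ 100 * (Wf (2*k) * (a ^ (k+1) * b ^ 80)))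
    {n t : ℕ} (hn : 10 ^ 30 ≤ n) (htn : t < n) (hkt : k * n ≤ 20 * t)
    (htk : 20 * t < (k+1) * n) :
    ∑ i ∈ Finset.range (t/2 + 1), coeff3 n i < coeff3 n t :=
  regimeB a b k (Wf (2*k)) n t ha hab hk1
    (fun d h1 h2 => by rw [coeff3_40 d (by omega)]; exact hmin d (by omega) h1)
    hWle hWpos hnum hn htn hkt htk

-- floor computation
lemma floor_eq (n s : ℕ) (h1 : n < s) (h2 : s < 2 * n) :
    (⌊(n : ℝ) - (s : ℝ) / 2⌋).toNat = (2 * n - s) / 2 := by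
  set t := 2 * n - s with ht
  have hcast : (n:ℝ) - (s:ℝ)/2 = (t:ℝ)/2 := by
    have : (t:ℝ) = 2*(n:ℝ) - (s:ℝ) := by
      rw [ht]
      push_cast [Nat.cast_sub (by omega : s ≤ 2*n)]
      ring
    rw [this]; ring
  have hfl : ⌊(t:ℝ)/2⌋ = ((t/2 : ℕ) : ℤ) := by
    have ha : t / 2 * 2 ≤ t := by omega
    have hb : t < (t / 2 + 1) * 2 := by omega
    rw [Int.floor_eq_iff]
    constructor
    · push_cast
      rw [le_div_iff₀ (by norm_num : (0:ℝ) < 2)]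
      exact_mod_cast ha
    · push_cast
      rw [div_lt_iff₀ (by norm_num : (0:ℝ) < 2)]
      push_cast
      exact_mod_cast hb
  rw [hcast, hfl]
  exact Int.toNat_natCast _

end T3

open T3

/-- For `n` large and `n < s < 2n`, `∑_{i=0}^{⌊n - s/2⌋} f_{n,i} - f_{n,s} < 0`. -/
theorem sum_lt_coeff :
    ∃ N : ℕ, ∀ n : ℕ, N ≤ n → ∀ s : ℕ, n < s → s < 2 * n →
      (∑ i ∈ Finset.range ((⌊(n : ℝ) - (s : ℝ) / 2⌋).toNat + 1), (coeff3 n i : ℤ)) -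
        (coeff3 n s : ℤ) < 0 := by
  use 10 ^ 30
  intro n hN s hs1 hs2
  set t := 2 * n - s with ht
  have ht1 : 1 ≤ t := by omega
  have htn : t < n := by omega
  have hsym : coeff3 n s = coeff3 n t := coeff3_symm (by omega : s ≤ 2 * n)
  rw [floor_eq n s hs1 hs2, hsym, ← ht]
  have hmain : ∑ i ∈ Finset.range (t/2 + 1), coeff3 n i < coeff3 n t := by
    rcases le_or_gt t 25 with h25 | h26
    · exact regimeA1 ht1 h25 hN
    · rcases le_or_gt (5 * t) n with h5 | h5
      · exact regimeA2 (by omega) h5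
      · -- B regime
        have hn0 : 0 < n := by omega
        set k := 20 * t / n with hk
        have hkt : k * n ≤ 20 * t := Nat.div_mul_le_self (20 * t) n
        have htk : 20 * t < (k + 1) * n := by
          have h1 : n * k + 20 * t % n = 20 * t := by rw [hk]; exact Nat.div_add_mod _ _
          have hmod : 20 * t % n < n := Nat.mod_lt _ hn0
          calc 20 * t = n * k + 20 * t % n := h1.symm
          _ < n * k + n := by omega
          _ = (k + 1) * n := by ring
        have hk4 : 4 ≤ k := by
          rw [hk, Nat.le_div_iff_mul_le hn0]
          omega
        have hk19 : k ≤ 19 := by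
          have h20 : 20 * t / n < 20 := (Nat.div_lt_iff_lt_mul hn0).mpr (by omega)
          omega
        interval_cases k
        · exact regimeB' 2 17 4 (by norm_num) (by norm_num) (by norm_num)
            (by decide) (by decide) (by decide) (by decide) hN htn hkt htk
        · exact regimeB' 2 15 5 (by norm_num) (by norm_num) (by norm_num)
            (by decide) (by decide) (by decide) (by decide) hN htn hkt htk
        · exact regimeB' 3 19 6 (by norm_num) (by norm_num) (by norm_num)
            (by decide) (by decide) (by decide) (by decide) hN htn hkt htk
        · exact regimeB' 3 17 7 (by norm_num) (by norm_num) (by norm_num)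
            (by decide) (by decide) (by decide) (by decide) hN htn hkt htk
        · exact regimeB' 1 5 8 (by norm_num) (by norm_num) (by norm_num)
            (by decide) (by decide) (by decide) (by decide) hN htn hkt htk
        · exact regimeB' 2 9 9 (by norm_num) (by norm_num) (by norm_num)
            (by decide) (by decide) (by decide) (by decide) hN htn hkt htk
        · exact regimeB' 4 17 10 (by norm_num) (by norm_num) (by norm_num)
            (by decide) (by decide) (by decide) (by decide) hN htn hkt htk
        · exact regimeB' 5 19 11 (by norm_num) (by norm_num) (by norm_num)
            (by decide) (by decide) (by decide) (by decide) hN htn hkt htk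
        · exact regimeB' 2 7 12 (by norm_num) (by norm_num) (by norm_num)
            (by decide) (by decide) (by decide) (by decide) hN htn hkt htk
        · exact regimeB' 4 13 13 (by norm_num) (by norm_num) (by norm_num)
            (by decide) (by decide) (by decide) (by decide) hN htn hkt htk
        · exact regimeB' 1 3 14 (by norm_num) (by norm_num) (by norm_num)
            (by decide) (by decide) (by decide) (by decide) hN htn hkt htk
        · exact regimeB' 7 20 15 (by norm_num) (by norm_num) (by norm_num)
            (by decide) (by decide) (by decide) (by decide) hN htn hkt htk
        · exact regimeB' 7 19 16 (by norm_num) (by norm_num) (by norm_num)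
            (by decide) (by decide) (by decide) (by decide) hN htn hkt htk
        · exact regimeB' 7 18 17 (by norm_num) (by norm_num) (by norm_num)
            (by decide) (by decide) (by decide) (by decide) hN htn hkt htk
        · exact regimeB' 7 17 18 (by norm_num) (by norm_num) (by norm_num)
            (by decide) (by decide) (by decide) (by decide) hN htn hkt htk
        · exact regimeB' 7 16 19 (by norm_num) (by norm_num) (by norm_num)
            (by decide) (by decide) (by decide) (by decide) hN htn hkt htk
  have hcast : (∑ i ∈ Finset.range (t/2 + 1), (coeff3 n i : ℤ))
      = ((∑ i ∈ Finset.range (t/2 + 1), coeff3 n i : ℕ) : ℤ) := by push_cast; rfl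
  rw [hcast]
  have : ((∑ i ∈ Finset.range (t/2 + 1), coeff3 n i : ℕ) : ℤ) < ((coeff3 n t : ℕ) : ℤ) := by
    exact_mod_cast hmain
  omega
end

section
/- There exists N such that for all integers n ≥ N, one has 2·f_{n,0} + ∑_{i=1}^{⌊n/2⌋} f_{n,i} − f_{n,n} < 0, where ⌊·⌋ denotes the integer part. -/
namespace Coeff3Aux

open Polynomial

noncomputable def p : ℕ[X] := 1 + X + X ^ 2

lemma coeff3_eq (n i : ℕ) : coeff3 n i = (p ^ n).coeff i := rfl

lemma p_natDegree_le : p.natDegree ≤ 2 := by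
  unfold p; compute_degree

lemma reflect_p : p.reflect 2 = p := by
  have h1 : reflect 2 (1 : ℕ[X]) = X ^ 2 := by
    rw [← C_1, reflect_C]; simp
  have h2 : reflect 2 (X : ℕ[X]) = X := by
    rw [← pow_one (X : ℕ[X]), reflect_monomial]
    norm_num [revAt_le]
  have h3 : reflect 2 ((X : ℕ[X]) ^ 2) = 1 := by
    rw [reflect_monomial]
    norm_num [revAt_le]
  unfold p
  rw [reflect_add, reflect_add, h1, h2, h3]
  ring

lemma reflect_p_pow (n : ℕ) : (p ^ n).reflect (2 * n) = p ^ n := by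
  induction n with
  | zero => simp
  | succ k ih =>
    have h : (p ^ (k+1)).reflect (2 * (k+1)) = p.reflect 2 * (p ^ k).reflect (2 * k) := by
      rw [pow_succ, mul_comm (p ^ k) p, mul_add 2 k 1, mul_one, add_comm (2*k) 2]
      exact reflect_mul p (p ^ k) p_natDegree_le
        (le_trans (natDegree_pow_le_of_le k p_natDegree_le) (by omega))
    rw [h, reflect_p, ih, pow_succ, mul_comm]

lemma coeff_symm {n i : ℕ} (h : i ≤ 2 * n) : (p ^ n).coeff i = (p ^ n).coeff (2 * n - i) := by
  conv_lhs => rw [← reflect_p_pow n, coeff_reflect, revAt_le h]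

lemma eval_sum (n : ℕ) : ∑ i ∈ Finset.range (2 * n + 1), (p ^ n).coeff i * 2 ^ i = 7 ^ n := by
  have hd : (p ^ n).natDegree < 2 * n + 1 := by
    have := natDegree_pow_le_of_le n p_natDegree_le
    omega
  have := eval_eq_sum_range' hd (2 : ℕ)
  rw [← this, eval_pow]
  norm_num [p]

lemma supermult (a b : ℕ) : (p ^ a).coeff a * (p ^ b).coeff b ≤ (p ^ (a + b)).coeff (a + b) := by
  rw [pow_add, coeff_mul]
  exact Finset.single_le_sum (f := fun x => (p ^ a).coeff x.1 * (p ^ b).coeff x.2)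
    (fun x _ => Nat.zero_le _) (Finset.HasAntidiagonal.mem_antidiagonal.mpr (rfl : (a, b).1 + (a, b).2 = a + b))

lemma coeff_zero' (n : ℕ) : (p ^ n).coeff 0 = 1 := by
  rw [coeff_zero_eq_eval_zero, eval_pow]
  norm_num [p]

lemma coeff_one_one : (p ^ 1).coeff 1 = 1 := by
  rw [pow_one]
  simp [p, coeff_one]

lemma coeff_diag_pos (n : ℕ) : 1 ≤ (p ^ n).coeff n := by
  induction n with
  | zero => simp [coeff_zero']
  | succ k ih =>
    calc 1 = 1 * 1 := by norm_num
    _ ≤ (p ^ 1).coeff 1 * (p ^ k).coeff k := by rw [coeff_one_one]; exact Nat.mul_le_mul le_rfl ih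
    _ ≤ (p ^ (1 + k)).coeff (1 + k) := supermult 1 k
    _ = (p ^ (k + 1)).coeff (k + 1) := by rw [add_comm]

/-- Computable version of coefficients of `(1+x+x^2)^n`. -/
def g : ℕ → ℕ → ℕ
  | 0, i => if i = 0 then 1 else 0
  | n + 1, i => g n i + (if 1 ≤ i then g n (i - 1) else 0) + (if 2 ≤ i then g n (i - 2) else 0)

lemma coeff_eq_g (n i : ℕ) : (p ^ n).coeff i = g n i := by
  induction n generalizing i with
  | zero => simp [g, coeff_one]
  | succ k ih =>
    have : p ^ (k + 1) = p ^ k * 1 + p ^ k * X + p ^ k * X ^ 2 := by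
      rw [pow_succ]; unfold p; ring
    rw [this, coeff_add, coeff_add, mul_one, coeff_mul_X_pow' (p ^ k) 2 i,
      ← pow_one (X : ℕ[X]), coeff_mul_X_pow' (p ^ k) 1 i, g]
    simp only [ih]

lemma coeff_12 : (p ^ 12).coeff 12 = 73789 := by
  rw [coeff_eq_g]; decide

lemma diag_lower (q r : ℕ) : 73789 ^ q ≤ (p ^ (12 * q + r)).coeff (12 * q + r) := by
  induction q with
  | zero => simpa using coeff_diag_pos r
  | succ k ih =>
    have h1 : 73789 ^ (k + 1) ≤ (p ^ 12).coeff 12 * (p ^ (12 * k + r)).coeff (12 * k + r) := by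
      rw [coeff_12, pow_succ, mul_comm]
      exact Nat.mul_le_mul le_rfl ih
    have h2 := supermult 12 (12 * k + r)
    have h3 : 12 + (12 * k + r) = 12 * (k + 1) + r := by ring
    rw [h3] at h2
    exact le_trans h1 h2

lemma tail_bound (n : ℕ) :
    2 ^ (2 * n - n / 2) * (∑ i ∈ Finset.Icc 1 (n / 2), (p ^ n).coeff i) ≤ 7 ^ n := by
  set m := n / 2 with hm
  have hmn : m ≤ n := Nat.div_le_self n 2
  calc 2 ^ (2 * n - m) * ∑ i ∈ Finset.Icc 1 m, (p ^ n).coeff i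
      = ∑ i ∈ Finset.Icc 1 m, (p ^ n).coeff i * 2 ^ (2 * n - m) := by
        rw [Finset.mul_sum]; exact Finset.sum_congr rfl (fun i _ => by ring)
    _ ≤ ∑ i ∈ Finset.Icc 1 m, (p ^ n).coeff (2 * n - i) * 2 ^ (2 * n - i) := by
        apply Finset.sum_le_sum
        intro i hi
        obtain ⟨hi1, hi2⟩ := Finset.mem_Icc.mp hi
        have hile : i ≤ 2 * n := by omega
        rw [← coeff_symm hile]
        exact Nat.mul_le_mul le_rfl (Nat.pow_le_pow_right (by norm_num) (by omega))
    _ = ∑ j ∈ (Finset.Icc 1 m).image (fun i => 2 * n - i), (p ^ n).coeff j * 2 ^ j := by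
        rw [Finset.sum_image]
        intro a ha b hb hab
        obtain ⟨ha1, ha2⟩ := Finset.mem_Icc.mp ha
        obtain ⟨hb1, hb2⟩ := Finset.mem_Icc.mp hb
        simp only at hab
        omega
    _ ≤ ∑ j ∈ Finset.range (2 * n + 1), (p ^ n).coeff j * 2 ^ j := by
        apply Finset.sum_le_sum_of_subset
        intro j hj
        simp only [Finset.mem_image, Finset.mem_Icc] at hj
        obtain ⟨i, ⟨hi1, hi2⟩, hij⟩ := hj
        simp only [Finset.mem_range]
        omega
    _ = 7 ^ n := eval_sum n

lemma numeric : ∀ q, 44 ≤ q → ∀ r, r ≤ 11 → 2 * 7 ^ (12*q + r) < 2 ^ (18*q + r) * 73789 ^ q := by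
  intro q hq
  induction q, hq using Nat.le_induction with
  | base => intro r hr; interval_cases r <;> decide +kernel
  | succ q hq ih =>
    intro r hr
    calc 2 * 7 ^ (12 * (q + 1) + r) = 7 ^ 12 * (2 * 7 ^ (12 * q + r)) := by ring
    _ < 7 ^ 12 * (2 ^ (18 * q + r) * 73789 ^ q) := by
        exact Nat.mul_lt_mul_of_le_of_lt le_rfl (ih r hr) (by positivity)
    _ ≤ (2 ^ 18 * 73789) * (2 ^ (18 * q + r) * 73789 ^ q) := by
        apply Nat.mul_le_mul_right
        norm_num
    _ = 2 ^ (18 * (q + 1) + r) * 73789 ^ (q + 1) := by ring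

lemma main_nat (n : ℕ) (hn : 540 ≤ n) :
    (∑ i ∈ Finset.Icc 1 (n / 2), (p ^ n).coeff i) + 2 < (p ^ n).coeff n := by
  set q := n / 12 with hq
  set r := n % 12 with hr
  have hnqr : n = 12 * q + r := by rw [hq, hr]; omega
  have hq44 : 44 ≤ q := by omega
  have hr11 : r ≤ 11 := by omega
  set E := 2 * n - n / 2 with hE
  have hEge : 18 * q + r ≤ E := by omega
  set S := ∑ i ∈ Finset.Icc 1 (n / 2), (p ^ n).coeff i with hS
  set T := (p ^ n).coeff n with hT
  have h1 : 2 ^ E * S ≤ 7 ^ n := tail_bound n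
  have h2 : 73789 ^ q ≤ T := by rw [hT]; rw [hnqr]; exact diag_lower q r
  have h3 : 2 * 7 ^ n < 2 ^ E * 73789 ^ q := by
    calc 2 * 7 ^ n = 2 * 7 ^ (12 * q + r) := by rw [← hnqr]
    _ < 2 ^ (18 * q + r) * 73789 ^ q := numeric q hq44 r hr11
    _ ≤ 2 ^ E * 73789 ^ q :=
        Nat.mul_le_mul_right _ (Nat.pow_le_pow_right (by norm_num) hEge)
  have h4 : 2 ^ (E + 1) ≤ 7 ^ n := by
    calc 2 ^ (E + 1) ≤ 2 ^ (2 * n) := Nat.pow_le_pow_right (by norm_num) (by omega)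
    _ = 4 ^ n := by rw [pow_mul]; norm_num
    _ ≤ 7 ^ n := Nat.pow_le_pow_left (by norm_num) n
  have key : 2 ^ E * (S + 2) < 2 ^ E * T := by
    calc 2 ^ E * (S + 2) = 2 ^ E * S + 2 ^ (E + 1) := by ring
    _ ≤ 7 ^ n + 7 ^ n := Nat.add_le_add h1 h4
    _ = 2 * 7 ^ n := by ring
    _ < 2 ^ E * 73789 ^ q := h3
    _ ≤ 2 ^ E * T := Nat.mul_le_mul le_rfl h2
  exact Nat.lt_of_mul_lt_mul_left key

end Coeff3Aux

/-- For `n` large, `2 f_{n,0} + ∑_{i=1}^{⌊n/2⌋} f_{n,i} - f_{n,n} < 0`. -/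
theorem two_coeff_sum_lt :
    ∃ N : ℕ, ∀ n : ℕ, N ≤ n →
      2 * (coeff3 n 0 : ℤ) + (∑ i ∈ Finset.Icc 1 (n / 2), (coeff3 n i : ℤ)) -
        (coeff3 n n : ℤ) < 0 := by
  refine ⟨540, fun n hn => ?_⟩
  have h0 : coeff3 n 0 = 1 := Coeff3Aux.coeff_zero' n
  have key := Coeff3Aux.main_nat n hn
  have hsum : (∑ i ∈ Finset.Icc 1 (n / 2), (coeff3 n i : ℤ)) =
      ((∑ i ∈ Finset.Icc 1 (n / 2), (Coeff3Aux.p ^ n).coeff i : ℕ) : ℤ) := by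
    push_cast
    rfl
  rw [h0, hsum]
  have hT : coeff3 n n = (Coeff3Aux.p ^ n).coeff n := rfl
  rw [hT]
  omega
end

section
/- There exists S such that for all integers s ≥ S, setting n = 3s, for every integer k with 0 < k < s one has f_{n,2k−1} + 2·f_{n,2k} + ∑_{i=2k+1}^{⌊(n+k)/2⌋} f_{n,i} − f_{n,n−k} < 0, where ⌊·⌋ denotes the integer part. -/
open Polynomial

lemma pmonic : (1 + X + X ^ 2 : ℕ[X]).Monic := by monicity!

lemma pdeg : (1 + X + X ^ 2 : ℕ[X]).natDegree = 2 := by compute_degree!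

lemma pow_deg (n : ℕ) : ((1 + X + X ^ 2 : ℕ[X]) ^ n).natDegree = 2 * n := by
  rw [pmonic.natDegree_pow, pdeg]; ring

lemma prev : (1 + X + X ^ 2 : ℕ[X]).reverse = 1 + X + X ^ 2 := by
  ext i
  rw [coeff_reverse, pdeg]
  match i with
  | 0 => simp [coeff_one, coeff_X]
  | 1 => simp [coeff_one, coeff_X]
  | 2 => simp [coeff_one, coeff_X]
  | (j+3) => rw [revAt_eq_self_of_lt (by omega)]

lemma pow_rev (n : ℕ) : ((1 + X + X ^ 2 : ℕ[X]) ^ n).reverse = (1 + X + X ^ 2) ^ n := by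
  induction n with
  | zero => rw [pow_zero, ← C_1, reverse_C]
  | succ n ih =>
    rw [pow_succ, reverse_mul, ih, prev]
    rw [(pmonic.pow n).leadingCoeff, pmonic.leadingCoeff]
    simp

lemma symm3 (n i : ℕ) (h : i ≤ 2 * n) : coeff3 n i = coeff3 n (2 * n - i) := by
  unfold coeff3
  conv_lhs => rw [← pow_rev n]
  rw [coeff_reverse, pow_deg, revAt_le h]

lemma succ3 (n j : ℕ) :
    coeff3 (n + 1) (j + 2) = coeff3 n (j + 2) + coeff3 n (j + 1) + coeff3 n j := by
  unfold coeff3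
  rw [pow_succ, mul_add, mul_add, mul_one]
  rw [coeff_add, coeff_add]
  rw [show j + 2 = (j + 1) + 1 from rfl, coeff_mul_X, coeff_mul_X_pow' _ 2, if_pos (by omega),
    show j + 1 + 1 - 2 = j from by omega]

lemma coeff3_zero (n : ℕ) : coeff3 n 0 = 1 := by
  unfold coeff3
  rw [coeff_zero_eq_eval_zero]
  simp

lemma coeff3_one (n : ℕ) : coeff3 n 1 = n := by
  induction n with
  | zero => simp [coeff3, coeff_one]
  | succ n ih =>
    unfold coeff3 at *
    rw [pow_succ, mul_add, mul_add, mul_one, coeff_add, coeff_add,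
      show (1:ℕ) = 0 + 1 from rfl, coeff_mul_X, coeff_mul_X_pow' _ 2, if_neg (by omega),
      coeff_zero_eq_eval_zero, ih]
    simp

lemma coeff3_two (n : ℕ) : 2 * coeff3 n 2 = n * (n + 1) := by
  induction n with
  | zero => simp [coeff3, coeff_one]
  | succ n ih =>
    rw [succ3 n 0, coeff3_one, coeff3_zero]
    ring_nf
    ring_nf at ih
    omega

lemma hd3 : derivative (1 + X + X ^ 2 : ℕ[X]) = 1 + 2 * X := by
  simp [derivative_X_pow]

lemma polyid (n : ℕ) :
    (1 + X + X ^ 2 : ℕ[X]) * derivative ((1 + X + X ^ 2) ^ n)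
      = C (n : ℕ) * ((1 + 2 * X) * (1 + X + X ^ 2) ^ n) := by
  cases n with
  | zero => simp
  | succ m =>
    rw [derivative_pow, hd3, Nat.succ_sub_one]
    push_cast
    ring

lemma rec3' (n j : ℕ) :
    ((1+X+X^2:ℕ[X])^n).coeff (j+3) * (j+3) + ((1+X+X^2:ℕ[X])^n).coeff (j+2) * (j+2)
      + ((1+X+X^2:ℕ[X])^n).coeff (j+1) * (j+1)
      = n * (((1+X+X^2:ℕ[X])^n).coeff (j+2) + 2 * ((1+X+X^2:ℕ[X])^n).coeff (j+1)) := by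
  have h := congrArg (fun p => Polynomial.coeff p (j+2)) (polyid n)
  beta_reduce at h
  rw [add_mul, add_mul, one_mul, coeff_add, coeff_add,
    show j + 2 = (j+1)+1 from rfl, coeff_X_mul,
    show (j+1)+1 = j+2 from rfl, coeff_X_pow_mul _ 2 j,
    coeff_derivative, coeff_derivative, coeff_derivative, coeff_C_mul,
    add_mul, one_mul, mul_assoc, coeff_add] at h
  rw [coeff_ofNat_mul, coeff_X_mul] at h
  simp only [Nat.cast_id, show j+1+1 = j+2 from rfl, show j+2+1 = j+3 from rfl] at h
  exact h

lemma rec3 (n j : ℕ) :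
    coeff3 n (j+3) * (j+3) + coeff3 n (j+2) * (j+2) + coeff3 n (j+1) * (j+1)
      = n * (coeff3 n (j+2) + 2 * coeff3 n (j+1)) := by
  unfold coeff3
  exact rec3' n j

lemma coeff3_pos (n : ℕ) : ∀ i, i ≤ 2 * n → 0 < coeff3 n i := by
  induction n with
  | zero =>
    intro i hi
    interval_cases i
    rw [coeff3_zero]; norm_num
  | succ n ih =>
    intro i hi
    match i with
    | 0 => rw [coeff3_zero]; norm_num
    | 1 => rw [coeff3_one]; omega
    | (j+2) =>
      rw [succ3]
      have := ih j (by omega)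
      omega

lemma mono3 (n : ℕ) : ∀ i, i < n → coeff3 n i ≤ coeff3 n (i + 1) := by
  induction n with
  | zero => intro i hi; omega
  | succ n ih =>
    intro i hi
    match i with
    | 0 => rw [coeff3_zero, coeff3_one]; omega
    | 1 =>
      rw [coeff3_one, show (1:ℕ)+1 = 0+2 from rfl, succ3, coeff3_one, coeff3_zero]
      omega
    | (j+2) =>
      rw [show j+2+1 = (j+1)+2 from rfl, succ3, succ3]
      simp only [show j+1+2 = j+3 from rfl, show j+1+1 = j+2 from rfl]
      have key : coeff3 n j ≤ coeff3 n (j+3) := by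
        rcases (by omega : j + 3 ≤ n ∨ n = j + 2) with h | h
        · calc coeff3 n j ≤ coeff3 n (j+1) := ih j (by omega)
            _ ≤ coeff3 n (j+2) := ih (j+1) (by omega)
            _ ≤ coeff3 n (j+3) := ih (j+2) (by omega)
        · subst h
          rw [symm3 (j+2) (j+3) (by omega), show 2*(j+2) - (j+3) = j+1 from by omega]
          exact ih j (by omega)
      omega

lemma mono3_le (n : ℕ) : ∀ i j, i ≤ j → j ≤ n → coeff3 n i ≤ coeff3 n j := by
  intro i j hij hj
  induction j, hij using Nat.le_induction with
  | base => exact le_refl _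
  | succ j hij ihj =>
    exact le_trans (ihj (by omega)) (mono3 n j (by omega))

lemma ratio (s : ℕ) (hs : 300 ≤ s) : ∀ i, i ≤ 2*s+2 →
    5 * coeff3 (3*s) i ≤ 3 * coeff3 (3*s) (i+1) := by
  intro i
  induction i using Nat.strong_induction_on with
  | _ i IH =>
    intro hi
    match i, IH with
    | 0, _ => rw [coeff3_zero, coeff3_one]; omega
    | 1, _ =>
      rw [coeff3_one]
      have h2 := coeff3_two (3*s)
      nlinarith
    | 2, _ =>
      have R := rec3 (3*s) 0
      simp only [zero_add, coeff3_one] at R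
      zify at R ⊢
      have hf2 : (0:ℤ) ≤ (coeff3 (3*s) 2 : ℤ) := by positivity
      nlinarith [mul_nonneg (show (0:ℤ) ≤ 3*(s:ℤ) - 7 by omega) hf2]
    | (j+3), IH =>
      have A := IH (j+1) (by omega) (by omega)
      have B := IH (j+2) (by omega) (by omega)
      have R1 := rec3 (3*s) j
      have R2 := rec3 (3*s) (j+1)
      simp only [show j+1+3 = j+4 from rfl, show j+1+2 = j+3 from rfl,
        show j+1+1 = j+2 from rfl, show j+2+1 = j+3 from rfl, show j+3+1 = j+4 from rfl] at A B R1 R2 ⊢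
      zify at A B R1 R2 ⊢
      set a := (coeff3 (3*s) (j+1) : ℤ) with ha
      set b := (coeff3 (3*s) (j+2) : ℤ) with hb
      set c := (coeff3 (3*s) (j+3) : ℤ) with hc
      set d := (coeff3 (3*s) (j+4) : ℤ) with hd
      have hc0 : (0:ℤ) ≤ c := by rw [hc]; positivity
      have hjs : (j : ℤ) ≤ 2*(s:ℤ) - 1 := by omega
      have hs' : (300:ℤ) ≤ (s:ℤ) := by omega
      have k1 : (0:ℤ) ≤ (2*(3*(s:ℤ)) - j - 1) * (3*b - 5*a) :=
        mul_nonneg (by omega) (by linarith)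
      have h1 : 5*((j:ℤ)+3)*c ≤ (11*(3*(s:ℤ)) - 8*j - 13) * b := by nlinarith [R1, k1]
      have t2 := mul_le_mul_of_nonneg_left h1
        (show (0:ℤ) ≤ 3*(2*(3*(s:ℤ)) - j - 2) by omega)
      have hF : (0:ℤ) ≤ 3*(3*(s:ℤ)-j-3)*(11*(3*(s:ℤ))-8*j-13) + 15*((j:ℤ)+3)*(2*(3*(s:ℤ))-j-2)
          - 5*((j:ℤ)+4)*(11*(3*(s:ℤ))-8*j-13) := by
        nlinarith [mul_nonneg (show (0:ℤ) ≤ 2*(s:ℤ)-1-j by omega)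
            (show (0:ℤ) ≤ 148*(s:ℤ)-114-49*((j:ℤ)+2) by omega),
          mul_nonneg (show (0:ℤ) ≤ (s:ℤ)-232 by omega) (show (0:ℤ) ≤ (s:ℤ) by omega)]
      have t3 := mul_nonneg hF hc0
      have t1 : 3*(11*(3*(s:ℤ))-8*j-13)*(((j:ℤ)+4)*d)
          = 3*(11*(3*(s:ℤ))-8*j-13)*((3*(s:ℤ)-j-3)*c + (2*(3*(s:ℤ))-j-2)*b) := by
        linear_combination (3*(11*(3*(s:ℤ))-8*j-13)) * R2
      have hM : (0:ℤ) < ((j:ℤ)+4)*(11*(3*(s:ℤ))-8*j-13) := by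
        apply mul_pos <;> omega
      have key : (((j:ℤ)+4)*(11*(3*(s:ℤ))-8*j-13)) * (5*c)
          ≤ (((j:ℤ)+4)*(11*(3*(s:ℤ))-8*j-13)) * (3*d) := by nlinarith [t1, t2, t3]
      exact (mul_le_mul_iff_right₀ hM).mp key

lemma sum_bound (s : ℕ) (hs : 300 ≤ s) (a : ℕ) : ∀ b, a ≤ b → b ≤ 2*s+2 →
    2 * (∑ i ∈ Finset.Icc a b, coeff3 (3*s) i) + 3 * coeff3 (3*s) a
      ≤ 5 * coeff3 (3*s) b := by
  intro b hab
  induction b, hab using Nat.le_induction with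
  | base => intro _; rw [Finset.Icc_self, Finset.sum_singleton]; omega
  | succ b hab ihb =>
    intro hb
    rw [← Finset.Ico_add_one_right_eq_Icc, Finset.sum_Ico_succ_top (by omega), Finset.Ico_add_one_right_eq_Icc]
    have h1 := ihb (by omega)
    have h2 := ratio s hs b (by omega)
    omega

lemma Icc_split_bot (f : ℕ → ℕ) (a b : ℕ) (h : a ≤ b) :
    ∑ i ∈ Finset.Icc a b, f i = f a + ∑ i ∈ Finset.Icc (a+1) b, f i := by
  rw [Finset.Icc_add_one_left_eq_Ioc, ← Finset.Ioc_insert_left h, Finset.sum_insert (by simp)]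

/-- For `n = 3s` with `s` large and `0 < k < s`,
`f_{n,2k-1} + 2 f_{n,2k} + ∑_{i=2k+1}^{⌊(n+k)/2⌋} f_{n,i} - f_{n,n-k} < 0`. -/
theorem ineq_three_s :
    ∃ S : ℕ, ∀ s : ℕ, S ≤ s → ∀ k : ℕ, 0 < k → k < s →
      (coeff3 (3 * s) (2 * k - 1) : ℤ) + 2 * (coeff3 (3 * s) (2 * k) : ℤ) +
          (∑ i ∈ Finset.Icc (2 * k + 1) ((3 * s + k) / 2), (coeff3 (3 * s) i : ℤ)) -
          (coeff3 (3 * s) (3 * s - k) : ℤ) < 0 := by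
  refine ⟨300, fun s hs k hk hks => ?_⟩
  -- reduce to a ℕ inequality
  have main : coeff3 (3*s) (2*k-1) + 2 * coeff3 (3*s) (2*k)
      + (∑ i ∈ Finset.Icc (2*k+1) ((3*s+k)/2), coeff3 (3*s) i)
      < coeff3 (3*s) (3*s-k) := by
    rcases (by omega : k = s - 1 ∨ k + 2 ≤ s) with hcase | hcase
    · -- k = s - 1
      have e1 : (3*s+k)/2 = 2*s-1 := by omega
      have e2 : 2*k+1 = 2*s-1 := by omega
      rw [e1, e2, Finset.Icc_self, Finset.sum_singleton]
      have r1 : 5 * coeff3 (3*s) (2*s-3) ≤ 3 * coeff3 (3*s) (2*s-2) := by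
        have := ratio s hs (2*s-3) (by omega)
        rwa [show 2*s-3+1 = 2*s-2 from by omega] at this
      have r2 : 5 * coeff3 (3*s) (2*s-2) ≤ 3 * coeff3 (3*s) (2*s-1) := by
        have := ratio s hs (2*s-2) (by omega)
        rwa [show 2*s-2+1 = 2*s-1 from by omega] at this
      have r3 : 5 * coeff3 (3*s) (2*s-1) ≤ 3 * coeff3 (3*s) (2*s) := by
        have := ratio s hs (2*s-1) (by omega)
        rwa [show 2*s-1+1 = 2*s from by omega] at this
      have r4 : 5 * coeff3 (3*s) (2*s) ≤ 3 * coeff3 (3*s) (2*s+1) :=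
        ratio s hs (2*s) (by omega)
      have e3 : 2*k-1 = 2*s-3 := by omega
      have e4 : 2*k = 2*s-2 := by omega
      have e5 : 3*s-k = 2*s+1 := by omega
      rw [e3, e4, e5]
      have pos : 0 < coeff3 (3*s) (2*s+1) := coeff3_pos (3*s) (2*s+1) (by omega)
      nlinarith [r1, r2, r3, r4, pos]
    · -- k + 2 ≤ s
      set m := (3*s+k)/2 with hm
      have hm1 : 2*k+1 ≤ m := by omega
      have hm2 : m ≤ 2*s-1 := by omega
      have hm3 : m + 3 ≤ 3*s-k := by omega
      -- split off the two bottom terms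
      have split : ∑ i ∈ Finset.Icc (2*k-1) m, coeff3 (3*s) i
          = coeff3 (3*s) (2*k-1) + coeff3 (3*s) (2*k)
            + ∑ i ∈ Finset.Icc (2*k+1) m, coeff3 (3*s) i := by
        rw [Icc_split_bot _ _ _ (by omega), show 2*k-1+1 = 2*k from by omega,
          Icc_split_bot _ _ _ (by omega)]
        ring
      have sb := sum_bound s hs (2*k-1) m (by omega) (by omega)
      rw [split] at sb
      have hmono : coeff3 (3*s) (2*k) ≤ coeff3 (3*s) m :=
        mono3_le (3*s) (2*k) m (by omega) (by omega)
      have hmono2 : coeff3 (3*s) (m+3) ≤ coeff3 (3*s) (3*s-k) :=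
        mono3_le (3*s) (m+3) (3*s-k) hm3 (by omega)
      have r1 : 5 * coeff3 (3*s) m ≤ 3 * coeff3 (3*s) (m+1) := ratio s hs m (by omega)
      have r2 : 5 * coeff3 (3*s) (m+1) ≤ 3 * coeff3 (3*s) (m+2) := by
        have := ratio s hs (m+1) (by omega)
        rwa [show m+1+1 = m+2 from rfl] at this
      have r3 : 5 * coeff3 (3*s) (m+2) ≤ 3 * coeff3 (3*s) (m+3) := by
        have := ratio s hs (m+2) (by omega)
        rwa [show m+2+1 = m+3 from rfl] at this
      have pos : 0 < coeff3 (3*s) (3*s-k) := coeff3_pos (3*s) (3*s-k) (by omega)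
      nlinarith [sb, hmono, hmono2, r1, r2, r3, pos]
  have cast : ((∑ i ∈ Finset.Icc (2*k+1) ((3*s+k)/2), (coeff3 (3*s) i : ℤ)))
      = ((∑ i ∈ Finset.Icc (2*k+1) ((3*s+k)/2), coeff3 (3*s) i : ℕ) : ℤ) := by
    push_cast; rfl
  rw [cast]
  have := main
  zify at this
  linarith
end

section
/- There exists N such that for all integers n ≥ N and every feasible vector (t₀, …, t_{2n}) for the cap set linear program, there exists a feasible vector (t₀', …, t_{2n}') with t_i' = 0 for all i > n and 3·∑_{i=0}^{2n} f_{n,i}·t_i' ≤ 3·∑_{i=0}^{2n} f_{n,i}·t_i. -/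
open Polynomial Finset Filter

/-- A vector `(t₀, …, t_{2n})` (given as a function on `ℕ`) is feasible for the
cap set linear program if all its entries are nonnegative and
`t_i + t_j + t_k ≥ 1` whenever `i + j + k ≤ 2n`. -/
def LPFeasible (n : ℕ) (t : ℕ → ℝ) : Prop :=
  (∀ i, i ≤ 2 * n → 0 ≤ t i) ∧
  (∀ i j k : ℕ, i + j + k ≤ 2 * n → 1 ≤ t i + t j + t k)

/-- The objective value `3 ∑_{i=0}^{2n} f_{n,i} t_i` of the cap set linear program. -/
noncomputable def LPObj (n : ℕ) (t : ℕ → ℝ) : ℝ :=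
  3 * ∑ i ∈ Finset.range (2 * n + 1), (coeff3 n i : ℝ) * t i

lemma p3_natDegree_le' {R : Type*} [Semiring R] (n : ℕ) :
    ((1 + X + X ^ 2 : R[X]) ^ n).natDegree ≤ 2 * n := by
  refine (natDegree_pow_le).trans ?_
  have h : (1 + X + X ^ 2 : R[X]).natDegree ≤ 2 := by
    refine (natDegree_add_le _ _).trans (max_le ((natDegree_add_le _ _).trans (max_le ?_ ?_)) ?_)
    · simp
    · exact natDegree_X_le.trans one_le_two
    · exact natDegree_X_pow_le 2
  calc n * (1 + X + X^2 : R[X]).natDegree ≤ n * 2 := Nat.mul_le_mul_left n h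
    _ = 2 * n := Nat.mul_comm _ _

lemma coeff3_sum (m : ℕ) : ∑ i ∈ range (2 * m + 1), coeff3 m i = 3 ^ m := by
  have h := Polynomial.eval_eq_sum_range' (R := ℕ)
    (p := (1 + X + X ^ 2 : ℕ[X]) ^ m) (Nat.lt_succ_of_le (p3_natDegree_le' m)) 1
  simp only [one_pow, mul_one] at h
  have h2 : eval 1 ((1 + X + X ^ 2 : ℕ[X]) ^ m) = 3 ^ m := by simp [eval_pow]
  unfold coeff3
  rw [← h, h2]

lemma reflect_p3 : reflect 2 (1 + X + X ^ 2 : ℕ[X]) = 1 + X + X ^ 2 := by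
  have : (1 + X + X ^ 2 : ℕ[X]) = X ^ 0 + X ^ 1 + X ^ 2 := by simp
  rw [this, reflect_add, reflect_add, reflect_monomial, reflect_monomial, reflect_monomial]
  have h : ∀ i : ℕ, i ≤ 2 → (revAt 2) i = 2 - i := fun i h => revAt_le h
  rw [h 0 (by norm_num), h 1 (by norm_num), h 2 (by norm_num)]
  ring

lemma reflect_p3_pow (m : ℕ) :
    reflect (2 * m) ((1 + X + X ^ 2 : ℕ[X]) ^ m) = (1 + X + X ^ 2 : ℕ[X]) ^ m := by
  induction m with
  | zero => simp
  | succ k ih =>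
      have h1 : (1 + X + X ^ 2 : ℕ[X]) ^ (k + 1) = (1 + X + X ^ 2) * (1 + X + X ^ 2) ^ k := by ring
      rw [h1]
      have h2 : 2 * (k + 1) = 2 + 2 * k := by ring
      rw [h2, reflect_mul (1 + X + X^2) _ (by simpa using p3_natDegree_le' (R := ℕ) 1)
        (p3_natDegree_le' k), reflect_p3, ih]

lemma coeff3_symm (m i : ℕ) (h : i ≤ 2 * m) : coeff3 m i = coeff3 m (2 * m - i) := by
  unfold coeff3
  conv_lhs => rw [← reflect_p3_pow m]
  rw [coeff_reflect, revAt_le h]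

lemma coeff3_step (k i d : ℕ) (hd : d ≤ 2) (hdi : d ≤ i) :
    coeff3 k (i - d) ≤ coeff3 (k + 1) i := by
  unfold coeff3
  have hp : ((1 + X + X ^ 2 : ℕ[X])) ^ (k+1) = (1 + X + X^2) * (1 + X + X^2)^k := by ring
  rw [hp, coeff_mul]
  have hmem : (d, i - d) ∈ antidiagonal i := by
    rw [Finset.HasAntidiagonal.mem_antidiagonal]; omega
  have hcd : (1 + X + X ^ 2 : ℕ[X]).coeff d = 1 := by
    interval_cases d <;> simp [coeff_one, coeff_X]
  calc ((1 + X + X^2 : ℕ[X])^k).coeff (i - d)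
      = (1 + X + X ^ 2 : ℕ[X]).coeff d * ((1 + X + X^2 : ℕ[X])^k).coeff (i-d) := by
        rw [hcd, one_mul]
    _ ≤ _ := Finset.single_le_sum
        (f := fun x : ℕ × ℕ => (1 + X + X^2 : ℕ[X]).coeff x.1 * ((1+X+X^2:ℕ[X])^k).coeff x.2)
        (fun _ _ => Nat.zero_le _) hmem

lemma coeff3_conv (m : ℕ) :
    coeff3 (2 * m) (2 * m) = ∑ k ∈ range (2 * m + 1), coeff3 m k * coeff3 m (2 * m - k) := by
  unfold coeff3
  have hp : ((1 + X + X ^ 2 : ℕ[X])) ^ (2 * m) = (1 + X + X^2)^m * (1 + X + X^2)^m := by ring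
  rw [hp, coeff_mul, Finset.Nat.sum_antidiagonal_eq_sum_range_succ_mk]

lemma central_lower (m : ℕ) : 3 ^ (2 * m) ≤ (2 * m + 1) * coeff3 (2 * m) (2 * m) := by
  have hconv : coeff3 (2 * m) (2 * m) = ∑ k ∈ range (2 * m + 1), (coeff3 m k) ^ 2 := by
    rw [coeff3_conv]
    refine Finset.sum_congr rfl fun k hk => ?_
    rw [Finset.mem_range] at hk
    rw [← coeff3_symm m k (by omega), sq]
  have hcs : (∑ k ∈ range (2 * m + 1), coeff3 m k) ^ 2
      ≤ #(range (2 * m + 1)) * ∑ k ∈ range (2 * m + 1), (coeff3 m k) ^ 2 :=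
    sq_sum_le_card_mul_sum_sq
  rw [coeff3_sum, Finset.card_range] at hcs
  rw [hconv]
  calc (3:ℕ) ^ (2 * m) = (3 ^ m) ^ 2 := by rw [← pow_mul, Nat.mul_comm]
    _ ≤ _ := hcs

lemma central_mono : ∀ a b : ℕ, a ≤ b → coeff3 a a ≤ coeff3 b b := by
  intro a b hab
  induction b with
  | zero => interval_cases a; rfl
  | succ k ih =>
      rcases Nat.lt_or_ge a (k+1) with h | h
      · exact (ih (by omega)).trans (by simpa using coeff3_step k (k+1) 1 (by norm_num) (by omega))
      · have : a = k + 1 := by omega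
        subst this; rfl

lemma coeff3_lower (n : ℕ) (hn : 2 ≤ n) : 3 ^ (n - 2) ≤ n * coeff3 n (n + 1) := by
  set m := (n - 1) / 2 with hm
  have h2m : 2 * m ≤ n - 1 := by omega
  have h2m' : n - 2 ≤ 2 * m := by omega
  have hstep : coeff3 (n - 1) (n - 1) ≤ coeff3 n (n + 1) := by
    have := coeff3_step (n - 1) (n + 1) 2 (by norm_num) (by omega)
    have he : n - 1 + 1 = n := by omega
    have he2 : n + 1 - 2 = n - 1 := by omega
    rwa [he, he2] at this
  have hc : coeff3 (2 * m) (2 * m) ≤ coeff3 n (n + 1) :=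
    (central_mono (2*m) (n-1) h2m).trans hstep
  calc (3:ℕ) ^ (n - 2) ≤ 3 ^ (2 * m) := Nat.pow_le_pow_right (by norm_num) h2m'
    _ ≤ (2 * m + 1) * coeff3 (2 * m) (2 * m) := central_lower m
    _ ≤ n * coeff3 n (n + 1) := Nat.mul_le_mul (by omega) hc

-- cast to ℝ
lemma coeff3_cast (n i : ℕ) :
    ((coeff3 n i : ℝ)) = ((1 + X + X ^ 2 : ℝ[X]) ^ n).coeff i := by
  have hmap : ((1 + X + X ^ 2 : ℕ[X]) ^ n).map (Nat.castRingHom ℝ)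
      = (1 + X + X ^ 2 : ℝ[X]) ^ n := by
    simp [Polynomial.map_pow, Polynomial.map_add, Polynomial.map_one]
  rw [← hmap, Polynomial.coeff_map]
  rfl

lemma coeff3_upper (n j : ℕ) (hj : j ≤ n / 2) :
    (coeff3 n j : ℝ) ≤ 2 ^ (n / 2) * (7 / 4) ^ n := by
  have hdeg : ((1 + X + X ^ 2 : ℝ[X]) ^ n).natDegree < 2 * n + 1 :=
    Nat.lt_succ_of_le (p3_natDegree_le' n)
  have heval := Polynomial.eval_eq_sum_range' hdeg (1/2 : ℝ)
  have hval : eval (1/2 : ℝ) ((1 + X + X ^ 2 : ℝ[X]) ^ n) = (7/4) ^ n := by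
    rw [eval_pow]; norm_num
  have hnonneg : ∀ i ∈ range (2 * n + 1),
      0 ≤ ((1 + X + X ^ 2 : ℝ[X]) ^ n).coeff i * (1/2 : ℝ) ^ i := by
    intro i _
    have : 0 ≤ ((1 + X + X ^ 2 : ℝ[X]) ^ n).coeff i := by
      rw [← coeff3_cast]; positivity
    positivity
  have hmem : j ∈ range (2 * n + 1) := by rw [Finset.mem_range]; omega
  have hsingle := Finset.single_le_sum hnonneg hmem
  rw [← heval, hval] at hsingle
  -- coeff j * (1/2)^j ≤ (7/4)^n
  rw [← coeff3_cast] at hsingle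
  have h2 : (coeff3 n j : ℝ) ≤ (7/4) ^ n * 2 ^ j := by
    have hpos : (0:ℝ) < (1/2) ^ j := by positivity
    have hid : ((1:ℝ)/2) ^ j * 2 ^ j = 1 := by
      rw [← mul_pow]; norm_num
    nlinarith [pow_pos (show (0:ℝ) < 2 by norm_num) j]
  calc (coeff3 n j : ℝ) ≤ (7/4)^n * 2 ^ j := h2
    _ ≤ (7/4)^n * 2 ^ (n/2) := by
        have : (2:ℝ)^j ≤ 2^(n/2) := pow_le_pow_right₀ one_le_two hj
        nlinarith [pow_pos (show (0:ℝ) < 7/4 by norm_num) n]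
    _ = 2 ^ (n/2) * (7/4)^n := mul_comm _ _

lemma key : ∃ N : ℕ, 1 ≤ N ∧ ∀ n, N ≤ n →
    (∑ j ∈ range (n / 2 + 1), coeff3 n j) ≤ coeff3 n (n + 1) := by
  set r : ℝ := 7 * Real.sqrt 2 / 12 with hr
  have hs2 : (0:ℝ) ≤ Real.sqrt 2 := Real.sqrt_nonneg 2
  have hs2sq : Real.sqrt 2 ^ 2 = 2 := Real.sq_sqrt (by norm_num)
  have hone : (1:ℝ) ≤ Real.sqrt 2 := by
    nlinarith [hs2sq, hs2]
  have hr0 : (0:ℝ) ≤ r := by positivity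
  have hr1 : r < 1 := by
    rw [hr]
    nlinarith [hs2sq, hs2]
  have htend := tendsto_pow_const_mul_const_pow_of_lt_one 2 hr0 hr1
  have hev : ∀ᶠ n : ℕ in atTop, (n:ℝ) ^ 2 * r ^ n < 1/9 :=
    htend.eventually_lt_const (by norm_num)
  obtain ⟨N0, hN0⟩ := eventually_atTop.mp hev
  refine ⟨max N0 2, le_trans (by norm_num) (le_max_right _ _), fun n hn => ?_⟩
  have hn2 : 2 ≤ n := le_trans (le_max_right _ _) hn
  have hnN0 : N0 ≤ n := le_trans (le_max_left _ _) hn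
  have hnpos : (0:ℝ) < n := by positivity
  -- real versions
  have hA : (↑(∑ j ∈ range (n / 2 + 1), coeff3 n j) : ℝ)
      ≤ (↑(n / 2 + 1) : ℝ) * (2 ^ (n / 2) * (7 / 4) ^ n) := by
    rw [Nat.cast_sum]
    calc (∑ j ∈ range (n / 2 + 1), (coeff3 n j : ℝ))
        ≤ ∑ _j ∈ range (n / 2 + 1), (2 ^ (n / 2) * (7 / 4) ^ n : ℝ) := by
          refine Finset.sum_le_sum fun j hj => coeff3_upper n j ?_
          rw [Finset.mem_range] at hj; omega
      _ = (↑(n / 2 + 1) : ℝ) * (2 ^ (n / 2) * (7 / 4) ^ n) := by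
          rw [Finset.sum_const, Finset.card_range, nsmul_eq_mul]
  have hcard : ((n / 2 + 1 : ℕ) : ℝ) ≤ (n : ℝ) := by
    have : n / 2 + 1 ≤ n := by omega
    exact_mod_cast this
  have hC : (2:ℝ) ^ (n / 2) ≤ Real.sqrt 2 ^ n := by
    calc (2:ℝ) ^ (n / 2) = (Real.sqrt 2 ^ 2) ^ (n / 2) := by rw [hs2sq]
      _ = Real.sqrt 2 ^ (2 * (n / 2)) := by rw [← pow_mul]
      _ ≤ Real.sqrt 2 ^ n := pow_le_pow_right₀ hone (by omega)
  have hD : Real.sqrt 2 ^ n * (7/4:ℝ) ^ n = 3 ^ n * r ^ n := by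
    rw [← mul_pow, ← mul_pow]
    congr 1
    rw [hr]; ring
  have hB : (↑(coeff3 n (n+1)) : ℝ) * n ≥ 3 ^ n / 9 := by
    have := coeff3_lower n hn2
    have hcast : ((3:ℕ) ^ (n-2) : ℝ) ≤ (n : ℝ) * (coeff3 n (n+1) : ℝ) := by exact_mod_cast this
    have h9 : (9:ℝ) * (3:ℝ) ^ (n - 2) = 3 ^ n := by
      have : (3:ℕ) ^ n = 9 * 3 ^ (n - 2) := by
        have : n - 2 + 2 = n := by omega
        calc (3:ℕ)^n = 3^(n-2+2) := by rw [‹n-2+2 = n›]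
          _ = 3^(n-2) * 9 := by rw [pow_add]; norm_num
          _ = 9 * 3^(n-2) := Nat.mul_comm _ _
      exact_mod_cast this.symm
    push_cast at hcast
    linarith
  have hrn : (n:ℝ) ^ 2 * r ^ n < 1/9 := hN0 n hnN0
  -- combine
  have hfinal : (↑(∑ j ∈ range (n / 2 + 1), coeff3 n j) : ℝ) ≤ (↑(coeff3 n (n+1)) : ℝ) := by
    have h3pos : (0:ℝ) < 3 ^ n := by positivity
    have hrpow : (0:ℝ) ≤ r ^ n := by positivity
    have hstep1 : (↑(∑ j ∈ range (n / 2 + 1), coeff3 n j) : ℝ) ≤ (n:ℝ) * (3 ^ n * r ^ n) := by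
      calc (↑(∑ j ∈ range (n / 2 + 1), coeff3 n j) : ℝ)
          ≤ (↑(n / 2 + 1) : ℝ) * (2 ^ (n / 2) * (7 / 4) ^ n) := hA
        _ ≤ (n:ℝ) * (Real.sqrt 2 ^ n * (7/4) ^ n) := by
            refine mul_le_mul hcard ?_ (by positivity) (by positivity)
            exact mul_le_mul_of_nonneg_right hC (by positivity)
        _ = (n:ℝ) * (3 ^ n * r ^ n) := by rw [hD]
    have hmul : (n:ℝ) * (↑(∑ j ∈ range (n / 2 + 1), coeff3 n j) : ℝ)
        ≤ (n:ℝ) * ((↑(coeff3 n (n+1)) : ℝ)) := by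
      calc (n:ℝ) * (↑(∑ j ∈ range (n / 2 + 1), coeff3 n j) : ℝ)
          ≤ (n:ℝ) * ((n:ℝ) * (3 ^ n * r ^ n)) :=
            mul_le_mul_of_nonneg_left hstep1 (le_of_lt hnpos)
        _ = ((n:ℝ)^2 * r ^ n) * 3 ^ n := by ring
        _ ≤ (1/9) * 3 ^ n := mul_le_mul_of_nonneg_right (le_of_lt hrn) (le_of_lt h3pos)
        _ = 3 ^ n / 9 := by ring
        _ ≤ (↑(coeff3 n (n+1)) : ℝ) * n := hB
        _ = (n:ℝ) * (↑(coeff3 n (n+1)) : ℝ) := mul_comm _ _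
    exact le_of_mul_le_mul_left hmul hnpos
  exact_mod_cast hfinal

/-- For large `n`, any feasible vector can be improved to one vanishing above `n`. -/
theorem lp_improve_above_n :
    ∃ N : ℕ, ∀ n : ℕ, N ≤ n → ∀ t : ℕ → ℝ, LPFeasible n t →
      ∃ t' : ℕ → ℝ, LPFeasible n t' ∧ (∀ i, n < i → i ≤ 2 * n → t' i = 0) ∧
        LPObj n t' ≤ LPObj n t := by
  obtain ⟨N, hN1, hkey⟩ := key
  refine ⟨N, fun n hn t ht => ?_⟩
  obtain ⟨ht0, htc⟩ := ht
  have hn1 : 1 ≤ n := le_trans hN1 hn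
  -- the minimizing index m* over [0, n+1]
  obtain ⟨ms, hms_mem, hms_min⟩ := Finset.exists_min_image (range (n + 2)) t ⟨0, by simp⟩
  rw [Finset.mem_range] at hms_mem
  set P : ℝ := t ms with hP
  have hmsle : ms ≤ n + 1 := by omega
  have hms2n : ms ≤ 2 * n := by omega
  have hP0 : 0 ≤ P := ht0 ms hms2n
  have hPle : P ≤ t (n + 1) := hms_min (n+1) (by rw [Finset.mem_range]; omega)
  set t' : ℕ → ℝ := fun i => if i ≤ n then t i + (if 2 * i ≤ n then P else 0) else 0 with ht'
  have hge : ∀ i, i ≤ n → t i ≤ t' i := by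
    intro i hi
    simp only [ht', hi, if_true]
    have : (0:ℝ) ≤ if 2 * i ≤ n then P else 0 := by split <;> simp [hP0]
    linarith
  have hzero : ∀ i, n < i → t' i = 0 := by
    intro i hi; simp only [ht']; rw [if_neg (by omega)]
  -- pair bound
  have hpair : ∀ j k, j + k + 1 ≤ n → 1 ≤ t' j + t' k := by
    intro j k hjk
    have hcon : 1 ≤ t j + t k + t ms := by
      have := htc j k ms (by omega)
      linarith
    have hj : j ≤ n := by omega
    have hk : k ≤ n := by omega
    rcases le_or_gt (2 * j) n with h2j | h2j
    · have h1 : t' j = t j + P := by simp only [ht', hj, if_true, h2j, if_true]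
      have h2 : t k ≤ t' k := hge k hk
      linarith
    · have h2k : 2 * k ≤ n := by omega
      have h1 : t' k = t k + P := by simp only [ht', hk, if_true, h2k, if_true]
      have h2 : t j ≤ t' j := hge j hj
      linarith
  refine ⟨t', ⟨?_, ?_⟩, fun i hi _ => hzero i hi, ?_⟩
  · -- nonneg
    intro i _
    rcases le_or_gt i n with h | h
    · exact le_trans (ht0 i (by omega)) (hge i h)
    · rw [hzero i h]
  · -- constraints
    intro i j k hijk
    by_cases hi : i ≤ n
    · by_cases hj : j ≤ n
      · by_cases hk : k ≤ n
        · have := htc i j k hijk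
          have h1 := hge i hi; have h2 := hge j hj; have h3 := hge k hk
          linarith
        · -- k > n
          push_neg at hk
          have := hpair i j (by omega)
          have hz := hzero k hk
          linarith
      · push_neg at hj
        have := hpair i k (by omega)
        have hz := hzero j hj
        linarith
    · push_neg at hi
      have := hpair j k (by omega)
      have hz := hzero i hi
      linarith
  · -- objective
    unfold LPObj
    have hsplit : ∀ u : ℕ → ℝ, ∑ i ∈ range (2 * n + 1), u i
        = ∑ i ∈ range (n + 1), u i + ∑ i ∈ Ico (n + 1) (2 * n + 1), u i := by
      intro u
      rw [Finset.range_eq_Ico, Finset.range_eq_Ico]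
      exact (Finset.sum_Ico_consecutive u (k := 2 * n + 1) (Nat.zero_le (n+1)) (by omega)).symm
    rw [hsplit (fun i => (coeff3 n i : ℝ) * t' i), hsplit (fun i => (coeff3 n i : ℝ) * t i)]
    have hico0 : ∑ i ∈ Ico (n + 1) (2 * n + 1), (coeff3 n i : ℝ) * t' i = 0 := by
      refine Finset.sum_eq_zero fun i hi => ?_
      rw [Finset.mem_Ico] at hi
      rw [hzero i (by omega), mul_zero]
    have hlow : ∑ i ∈ range (n + 1), (coeff3 n i : ℝ) * t' i
        = ∑ i ∈ range (n + 1), (coeff3 n i : ℝ) * t i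
          + ∑ i ∈ range (n / 2 + 1), (coeff3 n i : ℝ) * P := by
      have h1 : ∀ i ∈ range (n + 1), (coeff3 n i : ℝ) * t' i
          = (coeff3 n i : ℝ) * t i + (coeff3 n i : ℝ) * (if 2 * i ≤ n then P else 0) := by
        intro i hi
        rw [Finset.mem_range] at hi
        simp only [ht', (by omega : i ≤ n), if_true]
        ring
      rw [Finset.sum_congr rfl h1, Finset.sum_add_distrib]
      congr 1
      rw [← Finset.sum_subset (Finset.range_subset_range.mpr (by omega : n / 2 + 1 ≤ n + 1))
        (fun i _ hi2 => ?_)]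
      · refine Finset.sum_congr rfl fun i hi => ?_
        rw [Finset.mem_range] at hi
        rw [if_pos (by omega)]
      · rw [Finset.mem_range] at hi2
        rw [if_neg (by omega), mul_zero]
    rw [hico0, hlow]
    have hbound : ∑ i ∈ range (n / 2 + 1), (coeff3 n i : ℝ) * P
        ≤ ∑ i ∈ Ico (n + 1) (2 * n + 1), (coeff3 n i : ℝ) * t i := by
      calc ∑ i ∈ range (n / 2 + 1), (coeff3 n i : ℝ) * P
          = (↑(∑ i ∈ range (n / 2 + 1), coeff3 n i) : ℝ) * P := by
            rw [Nat.cast_sum, Finset.sum_mul]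
        _ ≤ (coeff3 n (n + 1) : ℝ) * P := by
            have := hkey n hn
            have hc : (↑(∑ i ∈ range (n / 2 + 1), coeff3 n i) : ℝ) ≤ (coeff3 n (n+1) : ℝ) := by
              exact_mod_cast this
            exact mul_le_mul_of_nonneg_right hc hP0
        _ ≤ (coeff3 n (n + 1) : ℝ) * t (n + 1) :=
            mul_le_mul_of_nonneg_left hPle (by positivity)
        _ ≤ _ := by
            refine Finset.single_le_sum (f := fun i => (coeff3 n i : ℝ) * t i)
              (fun i hi => ?_) (by rw [Finset.mem_Ico]; omega)
            rw [Finset.mem_Ico] at hi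
            exact mul_nonneg (by positivity) (ht0 i (by omega))
    linarith
end

section
/- There exists S such that for all integers s ≥ S, setting n = 3s, the vector (t₀*, …, t_{2n}*) defined by t_i* = 1 for 0 ≤ i ≤ 2s − 2, t_{2s−1}* = 2/3, t_{2s}* = 1/3, and t_i* = 0 for i ≥ 2s + 1, is an optimal solution of the cap set linear program: it is feasible, and every feasible vector (t₀, …, t_{2n}) satisfies 3·∑_{i=0}^{2n} f_{n,i}·t_i ≥ 3·∑_{i=0}^{2n} f_{n,i}·t_i*. -/
namespace CapLP

open Polynomial

noncomputable abbrev P : Polynomial ℕ := 1 + Polynomial.X + Polynomial.X ^ 2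

lemma mulP_coeff_add2 (q : Polynomial ℕ) (j : ℕ) :
    (q * P).coeff (j + 2) = q.coeff (j + 2) + q.coeff (j + 1) + q.coeff j := by
  have : q * P = q + q * Polynomial.X + q * Polynomial.X ^ 2 := by ring
  rw [this]
  rw [coeff_add, coeff_add, coeff_mul_X_pow, show j + 2 = (j + 1) + 1 from rfl, coeff_mul_X]

lemma mulP_coeff_zero (q : Polynomial ℕ) : (q * P).coeff 0 = q.coeff 0 := by
  have : q * P = q + q * Polynomial.X + q * Polynomial.X ^ 2 := by ring
  rw [this]
  simp [coeff_add, mul_coeff_zero]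

lemma mulP_coeff_one (q : Polynomial ℕ) : (q * P).coeff 1 = q.coeff 1 + q.coeff 0 := by
  have : q * P = q + q * Polynomial.X + q * Polynomial.X ^ 2 := by ring
  rw [this]
  simp [coeff_add, coeff_mul_X, coeff_mul_X_pow']

lemma coeff3_succ_add2 (n j : ℕ) :
    coeff3 (n + 1) (j + 2) = coeff3 n (j + 2) + coeff3 n (j + 1) + coeff3 n j := by
  unfold coeff3
  rw [pow_succ]
  exact mulP_coeff_add2 _ j

lemma coeff3_succ_zero (n : ℕ) : coeff3 (n + 1) 0 = coeff3 n 0 := by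
  unfold coeff3; rw [pow_succ]; exact mulP_coeff_zero _

lemma coeff3_succ_one (n : ℕ) : coeff3 (n + 1) 1 = coeff3 n 1 + coeff3 n 0 := by
  unfold coeff3; rw [pow_succ]; exact mulP_coeff_one _

lemma coeff3_zero (n : ℕ) : coeff3 n 0 = 1 := by
  induction n with
  | zero => simp [coeff3]
  | succ n ih => rw [coeff3_succ_zero, ih]

lemma coeff3_eq_zero {n j : ℕ} (h : 2 * n < j) : coeff3 n j = 0 := by
  unfold coeff3
  apply coeff_eq_zero_of_natDegree_lt
  calc (P ^ n).natDegree ≤ n * P.natDegree := natDegree_pow_le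
    _ ≤ n * 2 := by
        apply Nat.mul_le_mul_left
        apply le_trans (natDegree_add_le _ _)
        simp [natDegree_X_pow]
        exact le_trans (natDegree_add_le _ _) (by simp)
    _ < j := by omega

lemma coeff3_symm : ∀ n, ∀ k ≤ n, coeff3 n (n - k) = coeff3 n (n + k) := by
  intro n
  induction n with
  | zero => intro k hk; interval_cases k; rfl
  | succ n ih =>
    intro k hk
    rcases Nat.eq_zero_or_pos k with h0 | h0
    · subst h0; rfl
    rcases Nat.eq_or_lt_of_le hk with h | h
    · -- k = n + 1
      have e1 : n + 1 - k = 0 := by omega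
      have e2 : n + 1 + k = (2 * n) + 2 := by omega
      rw [e1, e2, coeff3_succ_add2, coeff3_succ_zero]
      rw [coeff3_eq_zero (show 2*n < 2*n+2 by omega),
          coeff3_eq_zero (show 2*n < 2*n+1 by omega)]
      have i1 := ih n le_rfl
      rw [Nat.sub_self, show n + n = 2*n by omega] at i1
      omega
    · have hk' : k ≤ n := by omega
      rcases Nat.eq_or_lt_of_le hk' with h2 | h2
      · -- k = n
        have e1 : n + 1 - k = 1 := by omega
        have e2 : n + 1 + k = (2 * n - 1) + 2 := by omega
        rw [e1, e2, coeff3_succ_add2, coeff3_succ_one]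
        rw [show 2*n-1+2 = 2*n+1 by omega]
        rw [coeff3_eq_zero (show 2*n < 2*n+1 by omega)]
        have i1 := ih n le_rfl
        have i2 := ih (n - 1) (by omega)
        rw [Nat.sub_self, show n + n = 2*n by omega] at i1
        rw [show n - (n-1) = 1 by omega, show n + (n-1) = 2*n-1 by omega] at i2
        rw [show 2*n-1+1 = 2*n by omega]
        rw [h2] at *
        omega
      · -- 1 ≤ k ≤ n - 1
        have e1 : n + 1 - k = (n - 1 - k) + 2 := by omega
        have e2 : n + 1 + k = (n - 1 + k) + 2 := by omega
        rw [e1, e2, coeff3_succ_add2, coeff3_succ_add2]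
        have i1 := ih (k - 1) (by omega)
        have i2 := ih k (by omega)
        have i3 := ih (k + 1) (by omega)
        rw [show n - (k-1) = n - 1 - k + 2 by omega, show n + (k-1) = n - 1 + k by omega] at i1
        rw [show n - k = n - 1 - k + 1 by omega, show n + k = (n-1+k) + 1 by omega] at i2
        rw [show n - (k+1) = n - 1 - k by omega, show n + (k+1) = (n-1+k) + 2 by omega] at i3
        omega

lemma coeff3_step : ∀ n, ∀ i < n, coeff3 n i ≤ coeff3 n (i + 1) := by
  intro n
  induction n with
  | zero => intro i hi; omega
  | succ n ih =>
    have mono_n : ∀ i j, i ≤ j → j ≤ n → coeff3 n i ≤ coeff3 n j := by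
      intro i j hij hj
      induction j with
      | zero => have : i = 0 := by omega
                subst this; exact le_rfl
      | succ j ihj =>
        rcases Nat.eq_or_lt_of_le hij with h | h
        · rw [h]
        · exact le_trans (ihj (by omega) (by omega)) (ih j (by omega))
    intro i hi
    rcases i with _ | _ | j
    · rw [coeff3_succ_zero, show (0:ℕ)+1 = 1 from rfl, coeff3_succ_one]
      omega
    · rw [show (1:ℕ)+1 = 0+2 from rfl, coeff3_succ_add2, coeff3_succ_one,
          show (0:ℕ)+2 = 2 from rfl, show (0:ℕ)+1 = 1 from rfl]
      omega
    · rw [show j+2+1 = (j+1)+2 from rfl, coeff3_succ_add2, coeff3_succ_add2,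
          show j+1+2 = j+3 from rfl, show j+1+1 = j+2 from rfl]
      have key : coeff3 n j ≤ coeff3 n (j + 3) := by
        rcases Nat.lt_or_ge (j+3) (n+1) with h | h
        · exact mono_n j (j+3) (by omega) (by omega)
        · have hj3 : j + 3 = n + 1 := by omega
          have hsym := coeff3_symm n 1 (by omega)
          have hthis : coeff3 n (j+3) = coeff3 n (n-1) := by rw [hj3, ← hsym]
          rw [hthis]
          exact mono_n j (n-1) (by omega) (by omega)
      omega

lemma coeff3_mono (n : ℕ) {i j : ℕ} (hij : i ≤ j) (hj : j ≤ n) : coeff3 n i ≤ coeff3 n j := by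
  induction j with
  | zero => have : i = 0 := by omega
            subst this; exact le_rfl
  | succ j ihj =>
    rcases Nat.eq_or_lt_of_le hij with h | h
    · rw [h]
    · exact le_trans (ihj (by omega) (by omega)) (coeff3_step n j (by omega))

lemma derivP : derivative P = 1 + C 2 * X := by
  unfold P
  rw [derivative_add, derivative_add, derivative_one, derivative_X, derivative_X_pow]
  norm_num

lemma keyPoly (n : ℕ) :
    P * derivative (P ^ n) = C n * P ^ n + C (2 * n) * P ^ n * X := by
  cases n with
  | zero => simp
  | succ n =>
    rw [derivative_pow]
    rw [show (n + 1) - 1 = n from rfl, derivP]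
    have : P * (C ((n:ℕ)+1 : ℕ) * P ^ n * (1 + C 2 * X))
        = C ((n:ℕ)+1 : ℕ) * P ^ (n+1) + (C 2 * C ((n:ℕ)+1 : ℕ)) * P ^ (n+1) * X := by
      ring
    push_cast
    rw [this, ← C_mul]

lemma coeff3_rec (n i : ℕ) :
    (i+3) * coeff3 n (i+3) + (i+2) * coeff3 n (i+2) + (i+1) * coeff3 n (i+1)
      = n * coeff3 n (i+2) + 2 * n * coeff3 n (i+1) := by
  have h := congrArg (fun q => Polynomial.coeff q (i+2)) (keyPoly n)
  rw [mul_comm P, mulP_coeff_add2] at h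
  rw [coeff_derivative, coeff_derivative, coeff_derivative] at h
  rw [coeff_add, coeff_C_mul, coeff_mul_X, coeff_C_mul] at h
  unfold coeff3
  rw [show i+2+1 = i+3 from rfl, show i+1+1 = i+2 from rfl, show i+0+1 = i+1 from rfl] at h
  push_cast at h ⊢
  ring_nf at h ⊢
  linarith [h]


noncomputable def g (s i : ℕ) : ℝ := (coeff3 (3*s) i : ℝ)

lemma gnn (s i : ℕ) : 0 ≤ g s i := Nat.cast_nonneg _

lemma gmono (s : ℕ) {i j : ℕ} (hij : i ≤ j) (hj : j ≤ 3*s) : g s i ≤ g s j := by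
  unfold g; exact_mod_cast coeff3_mono (3*s) hij hj

lemma recs (s j : ℕ) (hj : 2 ≤ j) :
    ((j:ℝ)+1) * g s (j+1) = (3*(s:ℝ) - j) * g s j + (6*(s:ℝ) - (j:ℝ) + 1) * g s (j-1) := by
  obtain ⟨i, rfl⟩ : ∃ i, j = i + 2 := ⟨j - 2, by omega⟩
  have h := coeff3_rec (3*s) i
  have hc : (((i+3) * coeff3 (3*s) (i+3) + (i+2) * coeff3 (3*s) (i+2)
      + (i+1) * coeff3 (3*s) (i+1) : ℕ):ℝ)
      = ((3*s * coeff3 (3*s) (i+2) + 2*(3*s)*coeff3 (3*s) (i+1) : ℕ):ℝ) := by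
    exact_mod_cast h
  push_cast at hc
  rw [show i+2+1 = i+3 from rfl, show i+2-1 = i+1 by omega]
  unfold g
  push_cast
  ring_nf
  ring_nf at hc
  linarith [hc]

section chain
variable {s : ℕ}

lemma hsR (hs : 500 ≤ s) : (500:ℝ) ≤ (s:ℝ) := by exact_mod_cast hs

lemma recc (hs : 500 ≤ s) (c : ℕ) (hc : c ≤ 9) :
    (2*(s:ℝ) - c + 1) * g s (2*s - c + 1)
      = ((s:ℝ) + c) * g s (2*s - c) + (4*(s:ℝ) + c + 1) * g s (2*s - c - 1) := by
  have h := recs s (2*s - c) (by omega)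
  have e : ((2*s - c : ℕ) : ℝ) = 2*(s:ℝ) - c := by
    rw [Nat.cast_sub (by omega)]; push_cast; ring
  rw [e] at h
  rw [h]
  ring

lemma B1 (hs : 500 ≤ s) : 9 * g s (2*s-7) ≤ 20 * g s (2*s-6) := by
  have h := recc hs 7 (by omega)
  rw [show 2*s-7+1 = 2*s-6 by omega, show 2*s-7-1 = 2*s-8 by omega] at h
  push_cast at h
  have h500 := hsR hs
  apply le_of_mul_le_mul_left _ (show (0:ℝ) < 2*(s:ℝ)-6 by linarith)
  nlinarith [gnn s (2*s-8), gnn s (2*s-7), h,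
    mul_nonneg (by linarith : (0:ℝ) ≤ (s:ℝ)) (gnn s (2*s-8)),
    mul_nonneg (by linarith : (0:ℝ) ≤ (s:ℝ)) (gnn s (2*s-7))]

lemma B2 (hs : 500 ≤ s) : 9 * g s (2*s-6) ≤ 20 * g s (2*s-5) := by
  have h := recc hs 6 (by omega)
  rw [show 2*s-6+1 = 2*s-5 by omega, show 2*s-6-1 = 2*s-7 by omega] at h
  push_cast at h
  have h500 := hsR hs
  apply le_of_mul_le_mul_left _ (show (0:ℝ) < 2*(s:ℝ)-5 by linarith)
  nlinarith [gnn s (2*s-7), gnn s (2*s-6), h,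
    mul_nonneg (by linarith : (0:ℝ) ≤ (s:ℝ)) (gnn s (2*s-7)),
    mul_nonneg (by linarith : (0:ℝ) ≤ (s:ℝ)) (gnn s (2*s-6))]

lemma U5a (hs : 500 ≤ s) : g s (2*s-5) ≤ 5 * g s (2*s-6) := by
  have h := recc hs 6 (by omega)
  rw [show 2*s-6+1 = 2*s-5 by omega, show 2*s-6-1 = 2*s-7 by omega] at h
  have hb := B1 hs
  push_cast at h
  have h500 := hsR hs
  apply le_of_mul_le_mul_left _ (show (0:ℝ) < 9*(2*(s:ℝ)-5) by linarith)
  nlinarith [gnn s (2*s-7), gnn s (2*s-6), h, hb,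
    mul_nonneg (by linarith : (0:ℝ) ≤ (s:ℝ)) (gnn s (2*s-7)),
    mul_nonneg (by linarith : (0:ℝ) ≤ (s:ℝ)) (gnn s (2*s-6)),
    mul_le_mul_of_nonneg_left hb (show (0:ℝ) ≤ 4*(s:ℝ)+7 by linarith)]

lemma U5b (hs : 500 ≤ s) : g s (2*s-4) ≤ 5 * g s (2*s-5) := by
  have h := recc hs 5 (by omega)
  rw [show 2*s-5+1 = 2*s-4 by omega, show 2*s-5-1 = 2*s-6 by omega] at h
  have hb := B2 hs
  push_cast at h
  have h500 := hsR hs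
  apply le_of_mul_le_mul_left _ (show (0:ℝ) < 9*(2*(s:ℝ)-4) by linarith)
  nlinarith [gnn s (2*s-6), gnn s (2*s-5), h, hb,
    mul_nonneg (by linarith : (0:ℝ) ≤ (s:ℝ)) (gnn s (2*s-6)),
    mul_nonneg (by linarith : (0:ℝ) ≤ (s:ℝ)) (gnn s (2*s-5)),
    mul_le_mul_of_nonneg_left hb (show (0:ℝ) ≤ 4*(s:ℝ)+6 by linarith)]

lemma L78a (hs : 500 ≤ s) : 7 * g s (2*s-5) ≤ 8 * g s (2*s-4) := by
  have h := recc hs 5 (by omega)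
  rw [show 2*s-5+1 = 2*s-4 by omega, show 2*s-5-1 = 2*s-6 by omega] at h
  have hb := U5a hs
  push_cast at h
  have h500 := hsR hs
  apply le_of_mul_le_mul_left _ (show (0:ℝ) < 5*(2*(s:ℝ)-4) by linarith)
  nlinarith [gnn s (2*s-6), gnn s (2*s-5), h, hb,
    mul_nonneg (by linarith : (0:ℝ) ≤ (s:ℝ)) (gnn s (2*s-6)),
    mul_nonneg (by linarith : (0:ℝ) ≤ (s:ℝ)) (gnn s (2*s-5)),
    mul_le_mul_of_nonneg_left hb (show (0:ℝ) ≤ 4*(s:ℝ)+6 by linarith)]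

lemma L78b (hs : 500 ≤ s) : 7 * g s (2*s-4) ≤ 8 * g s (2*s-3) := by
  have h := recc hs 4 (by omega)
  rw [show 2*s-4+1 = 2*s-3 by omega, show 2*s-4-1 = 2*s-5 by omega] at h
  have hb := U5b hs
  push_cast at h
  have h500 := hsR hs
  apply le_of_mul_le_mul_left _ (show (0:ℝ) < 5*(2*(s:ℝ)-3) by linarith)
  nlinarith [gnn s (2*s-5), gnn s (2*s-4), h, hb,
    mul_nonneg (by linarith : (0:ℝ) ≤ (s:ℝ)) (gnn s (2*s-5)),
    mul_nonneg (by linarith : (0:ℝ) ≤ (s:ℝ)) (gnn s (2*s-4)),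
    mul_le_mul_of_nonneg_left hb (show (0:ℝ) ≤ 4*(s:ℝ)+5 by linarith)]

lemma U3a (hs : 500 ≤ s) : g s (2*s-3) ≤ 3 * g s (2*s-4) := by
  have h := recc hs 4 (by omega)
  rw [show 2*s-4+1 = 2*s-3 by omega, show 2*s-4-1 = 2*s-5 by omega] at h
  have hb := L78a hs
  push_cast at h
  have h500 := hsR hs
  apply le_of_mul_le_mul_left _ (show (0:ℝ) < 7*(2*(s:ℝ)-3) by linarith)
  nlinarith [gnn s (2*s-5), gnn s (2*s-4), h, hb,
    mul_nonneg (by linarith : (0:ℝ) ≤ (s:ℝ)) (gnn s (2*s-5)),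
    mul_nonneg (by linarith : (0:ℝ) ≤ (s:ℝ)) (gnn s (2*s-4)),
    mul_le_mul_of_nonneg_left hb (show (0:ℝ) ≤ 4*(s:ℝ)+5 by linarith)]

lemma U3b (hs : 500 ≤ s) : g s (2*s-2) ≤ 3 * g s (2*s-3) := by
  have h := recc hs 3 (by omega)
  rw [show 2*s-3+1 = 2*s-2 by omega, show 2*s-3-1 = 2*s-4 by omega] at h
  have hb := L78b hs
  push_cast at h
  have h500 := hsR hs
  apply le_of_mul_le_mul_left _ (show (0:ℝ) < 7*(2*(s:ℝ)-2) by linarith)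
  nlinarith [gnn s (2*s-4), gnn s (2*s-3), h, hb,
    mul_nonneg (by linarith : (0:ℝ) ≤ (s:ℝ)) (gnn s (2*s-4)),
    mul_nonneg (by linarith : (0:ℝ) ≤ (s:ℝ)) (gnn s (2*s-3)),
    mul_le_mul_of_nonneg_left hb (show (0:ℝ) ≤ 4*(s:ℝ)+4 by linarith)]

lemma L76 (hs : 500 ≤ s) : 7 * g s (2*s-3) ≤ 6 * g s (2*s-2) := by
  have h := recc hs 3 (by omega)
  rw [show 2*s-3+1 = 2*s-2 by omega, show 2*s-3-1 = 2*s-4 by omega] at h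
  have hb := U3a hs
  push_cast at h
  have h500 := hsR hs
  apply le_of_mul_le_mul_left _ (show (0:ℝ) < 3*(2*(s:ℝ)-2) by linarith)
  nlinarith [gnn s (2*s-4), gnn s (2*s-3), h, hb,
    mul_nonneg (by linarith : (0:ℝ) ≤ (s:ℝ)) (gnn s (2*s-4)),
    mul_nonneg (by linarith : (0:ℝ) ≤ (s:ℝ)) (gnn s (2*s-3)),
    mul_le_mul_of_nonneg_left hb (show (0:ℝ) ≤ 4*(s:ℝ)+4 by linarith)]

lemma star1 (hs : 500 ≤ s) : 4 * g s (2*s-3) ≤ g s (2*s+2) := by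
  have h500 := hsR hs
  have h1 := recs s (2*s+1) (by omega)
  rw [show 2*s+1+1 = 2*s+2 by omega, show 2*s+1-1 = 2*s by omega] at h1
  push_cast at h1
  have h2 := recc hs 1 (by omega)
  rw [show 2*s-1+1 = 2*s by omega, show 2*s-1-1 = 2*s-2 by omega] at h2
  push_cast at h2
  have h3 := L76 hs
  have hs' : (0:ℝ) < (s:ℝ) := by linarith
  have e1 : 42*(s:ℝ)*(2*(s:ℝ)+2) * g s (2*s+2)
      = 42*(s:ℝ)*((s:ℝ)-1) * g s (2*s+1) + 168*(s:ℝ)^2 * g s (2*s) := by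
    linear_combination (42*(s:ℝ)) * h1
  have e2 : 168*(s:ℝ)^2 * g s (2*s)
      = 84*(s:ℝ)*((s:ℝ)+1) * g s (2*s-1) + 84*(s:ℝ)*(4*(s:ℝ)+2) * g s (2*s-2) := by
    linear_combination (84*(s:ℝ)) * h2
  have p1 : 0 ≤ 42*(s:ℝ)*((s:ℝ)-1) * g s (2*s+1) :=
    mul_nonneg (by nlinarith) (gnn _ _)
  have p2 : 0 ≤ 84*(s:ℝ)*((s:ℝ)+1) * g s (2*s-1) :=
    mul_nonneg (by nlinarith) (gnn _ _)
  have t3 : 14*(s:ℝ)*(4*(s:ℝ)+2) * (7 * g s (2*s-3)) ≤ 14*(s:ℝ)*(4*(s:ℝ)+2) * (6 * g s (2*s-2)) :=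
    mul_le_mul_of_nonneg_left h3 (by nlinarith)
  have q : 0 ≤ (56*(s:ℝ)^2 - 140*(s:ℝ)) * g s (2*s-3) :=
    mul_nonneg (by nlinarith) (gnn _ _)
  apply le_of_mul_le_mul_left _ (show (0:ℝ) < 42*(s:ℝ)*(2*(s:ℝ)+2) by nlinarith)
  nlinarith [e1, e2, p1, p2, t3, q]

lemma star2 (hs : 500 ≤ s) :
    g s (2*s-3) + 2 * g s (2*s-2) + g s (2*s-1) ≤ g s (2*s+1) := by
  have h500 := hsR hs
  have hI1 := recc hs 0 (by omega)
  rw [show 2*s-0+1 = 2*s+1 by omega, show 2*s-0 = 2*s by omega,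
      show 2*s-1 = 2*s-1 from rfl] at hI1
  push_cast at hI1
  have hI2 := recc hs 1 (by omega)
  rw [show 2*s-1+1 = 2*s by omega, show 2*s-1-1 = 2*s-2 by omega] at hI2
  push_cast at hI2
  have hI3 := recc hs 2 (by omega)
  rw [show 2*s-2+1 = 2*s-1 by omega, show 2*s-2-1 = 2*s-3 by omega] at hI3
  push_cast at hI3
  have hU := U3b hs
  have e4 : 2*(s:ℝ)*(2*(s:ℝ)+1) * g s (2*s+1)
      = (9*(s:ℝ)^2+3*(s:ℝ)) * g s (2*s-1) + (4*(s:ℝ)^2+2*(s:ℝ)) * g s (2*s-2) := by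
    linear_combination (2*(s:ℝ)) * hI1 + (s:ℝ) * hI2
  have e7 : (2*(s:ℝ)-1)*((5*(s:ℝ)^2+(s:ℝ)) * g s (2*s-1))
      = (5*(s:ℝ)^2+(s:ℝ))*((s:ℝ)+2) * g s (2*s-2)
        + (5*(s:ℝ)^2+(s:ℝ))*(4*(s:ℝ)+3) * g s (2*s-3) := by
    linear_combination (5*(s:ℝ)^2+(s:ℝ)) * hI3
  have e5 : (3*(s:ℝ)^3-11*(s:ℝ)^2-4*(s:ℝ)) * g s (2*s-2)
      ≤ (12*(s:ℝ)^3+19*(s:ℝ)^2+5*(s:ℝ)) * g s (2*s-3) := by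
    have t := mul_le_mul_of_nonneg_left hU
      (show (0:ℝ) ≤ 3*(s:ℝ)^3-11*(s:ℝ)^2-4*(s:ℝ) by nlinarith)
    have q5 : 0 ≤ (3*(s:ℝ)^3+52*(s:ℝ)^2+17*(s:ℝ)) * g s (2*s-3) :=
      mul_nonneg (by nlinarith) (gnn _ _)
    nlinarith [t, q5]
  have h8 : (4*(s:ℝ)^2+2*(s:ℝ))*(g s (2*s-3) + g s (2*s-2)) ≤ (5*(s:ℝ)^2+(s:ℝ)) * g s (2*s-1) := by
    apply le_of_mul_le_mul_left _ (show (0:ℝ) < 2*(s:ℝ)-1 by linarith)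
    nlinarith [e5, e7]
  apply le_of_mul_le_mul_left _ (show (0:ℝ) < 2*(s:ℝ)*(2*(s:ℝ)+1) by nlinarith)
  nlinarith [e4, h8]

end chain

section master
variable {s : ℕ}

/-- generic objective-sum split -/
lemma splitObj (hs : 500 ≤ s) (x : ℕ → ℝ) :
    ∑ i ∈ Finset.range (6*s+1), g s i * x i
      = (∑ i ∈ Finset.range (2*s-1), g s i * x i) + g s (2*s-1) * x (2*s-1)
        + g s (2*s) * x (2*s) + ∑ i ∈ Finset.Ico (2*s+1) (6*s+1), g s i * x i := by
  have h1 : ∑ i ∈ Finset.range (6*s+1), g s i * x i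
      = (∑ i ∈ Finset.range (2*s+1), g s i * x i)
        + ∑ i ∈ Finset.Ico (2*s+1) (6*s+1), g s i * x i := by
    rw [Finset.range_eq_Ico,
      ← Finset.sum_Ico_consecutive (fun i => g s i * x i)
      (Nat.zero_le (2*s+1)) (by omega : 2*s+1 ≤ 6*s+1), ← Finset.range_eq_Ico]
  rw [h1]
  have h2 : ∑ i ∈ Finset.range (2*s+1), g s i * x i
      = (∑ i ∈ Finset.range (2*s-1), g s i * x i) + g s (2*s-1) * x (2*s-1)
        + g s (2*s) * x (2*s) := by
    rw [show 2*s+1 = (2*s-1)+1+1 by omega, Finset.sum_range_succ, Finset.sum_range_succ,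
      show 2*s-1+1 = 2*s by omega]
  rw [h2]

lemma evenodd (k : ℕ) (F : ℕ → ℝ) :
    ∑ a ∈ Finset.range (2*k), F a
      = ∑ m ∈ Finset.range k, (F (2*m) + F (2*m+1)) := by
  induction k with
  | zero => simp
  | succ k ih =>
    rw [show 2*(k+1) = (2*k)+1+1 by omega, Finset.sum_range_succ, Finset.sum_range_succ,
      Finset.sum_range_succ, ih]
    ring

end master
end CapLP

namespace CapLP
noncomputable def Cc (s m : ℕ) : ℝ :=
  g s (2*m-1) + 2 * g s (2*m) + (if 2*m+1 ≤ 2*s-2 then g s (2*m+1) else 0)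

noncomputable def wfun (s : ℕ) : ℕ → ℝ := fun i =>
  if i ≤ 2*s-2 then 1 else if i = 2*s-1 then 2/3 else if i = 2*s then 1/3 else 0

section master2
variable {s : ℕ}

lemma wnn (s : ℕ) (i : ℕ) : 0 ≤ wfun s i := by
  unfold wfun; split_ifs <;> norm_num

lemma wval1 (hs : 500 ≤ s) : wfun s (2*s-1) = 2/3 := by
  unfold wfun; rw [if_neg (by omega), if_pos rfl]

lemma wval2 (hs : 500 ≤ s) : wfun s (2*s) = 1/3 := by
  unfold wfun; rw [if_neg (by omega), if_neg (by omega), if_pos rfl]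

lemma objW (hs : 500 ≤ s) :
    ∑ i ∈ Finset.range (6*s+1), g s i * wfun s i
      = (∑ i ∈ Finset.range (2*s-1), g s i) + g s (2*s-1) * (2/3) + g s (2*s) * (1/3) := by
  rw [splitObj hs]
  have h0 : ∑ i ∈ Finset.Ico (2*s+1) (6*s+1), g s i * wfun s i = 0 := by
    apply Finset.sum_eq_zero
    intro i hi
    rw [Finset.mem_Ico] at hi
    have : wfun s i = 0 := by
      unfold wfun; rw [if_neg (by omega), if_neg (by omega), if_neg (by omega)]
    rw [this, mul_zero]
  have h1 : ∑ i ∈ Finset.range (2*s-1), g s i * wfun s i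
      = ∑ i ∈ Finset.range (2*s-1), g s i := by
    apply Finset.sum_congr rfl
    intro i hi
    rw [Finset.mem_range] at hi
    have : wfun s i = 1 := by unfold wfun; rw [if_pos (by omega)]
    rw [this, mul_one]
  rw [h0, h1, wval1 hs, wval2 hs]
  ring

lemma feasW (hs : 500 ≤ s) : LPFeasible (3*s) (wfun s) := by
  constructor
  · intro i _; exact wnn s i
  · intro i j k hijk
    rw [show 2*(3*s) = 6*s by ring] at hijk
    by_cases hi : i ≤ 2*s-2
    · have : wfun s i = 1 := by unfold wfun; rw [if_pos hi]
      linarith [wnn s j, wnn s k, this.ge, this.le]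
    by_cases hj : j ≤ 2*s-2
    · have : wfun s j = 1 := by unfold wfun; rw [if_pos hj]
      linarith [wnn s i, wnn s k, this.ge, this.le]
    by_cases hk : k ≤ 2*s-2
    · have : wfun s k = 1 := by unfold wfun; rw [if_pos hk]
      linarith [wnn s i, wnn s j, this.ge, this.le]
    have hlb : ∀ x : ℕ, ¬ (x ≤ 2*s-2) → (2*(s:ℝ) + 1 - x)/3 ≤ wfun s x := by
      intro x hx
      by_cases h1 : x = 2*s-1
      · subst h1
        rw [wval1 hs]
        have : ((2*s-1 : ℕ) : ℝ) = 2*(s:ℝ) - 1 := by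
          rw [Nat.cast_sub (by omega)]; push_cast; ring
        rw [this]; norm_num
      by_cases h2 : x = 2*s
      · subst h2
        rw [wval2 hs]
        push_cast; norm_num
      · have hx3 : 2*s+1 ≤ x := by omega
        have : wfun s x = 0 := by
          unfold wfun; rw [if_neg hx, if_neg h1, if_neg h2]
        rw [this]
        have : (2*(s:ℝ)+1) ≤ (x:ℝ) := by exact_mod_cast hx3
        linarith
    have l1 := hlb i hi
    have l2 := hlb j hj
    have l3 := hlb k hk
    have hsum : ((i:ℝ) + j + k) ≤ 6*(s:ℝ) := by exact_mod_cast hijk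
    linarith

end master2
end CapLP

namespace CapLP
section master3
variable {s : ℕ}

lemma coefIneq (hs : 500 ≤ s) :
    ∀ j < s, Cc s (s-1-j) + (if j = 0 then g s (2*s-1) else 0) ≤ g s (2*s+1+j) := by
  intro j hj
  by_cases h0 : j = 0
  · subst h0
    rw [if_pos rfl]
    unfold Cc
    rw [show s-1-0 = s-1 by omega, show 2*(s-1)-1 = 2*s-3 by omega,
      show 2*(s-1) = 2*s-2 by omega, if_neg (by omega), show 2*s+1+0 = 2*s+1 by omega]
    have := star2 hs
    linarith
  · rw [if_neg h0]
    have hj1 : 1 ≤ j := by omega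
    have hm : s-1-j ≤ s-2 := by omega
    have hb : Cc s (s-1-j) ≤ 4 * g s (2*s-3) := by
      unfold Cc
      have m1 : g s (2*(s-1-j)-1) ≤ g s (2*s-3) := gmono s (by omega) (by omega)
      have m2 : g s (2*(s-1-j)) ≤ g s (2*s-3) := gmono s (by omega) (by omega)
      have m3 : (if 2*(s-1-j)+1 ≤ 2*s-2 then g s (2*(s-1-j)+1) else 0) ≤ g s (2*s-3) := by
        split_ifs
        · exact gmono s (by omega) (by omega)
        · exact gnn s _
      linarith
    have hb2 : g s (2*s+2) ≤ g s (2*s+1+j) := gmono s (by omega) (by omega)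
    have := star1 hs
    linarith

lemma mainIneq (hs : 500 ≤ s) (t : ℕ → ℝ)
    (htn : ∀ i, i ≤ 6*s → 0 ≤ t i)
    (htc : ∀ i j k : ℕ, i + j + k ≤ 6*s → 1 ≤ t i + t j + t k) :
    (∑ i ∈ Finset.range (2*s-1), g s i) + g s (2*s-1) * (2/3) + g s (2*s) * (1/3)
      ≤ ∑ i ∈ Finset.range (6*s+1), g s i * t i := by
  -- Step A : restrict the upper part
  have hIco1 : ∑ i ∈ Finset.Ico (2*s+1) (3*s+1), g s i * t i
      ≤ ∑ i ∈ Finset.Ico (2*s+1) (6*s+1), g s i * t i := by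
    rw [← Finset.sum_Ico_consecutive (fun i => g s i * t i)
      (show 2*s+1 ≤ 3*s+1 by omega) (show 3*s+1 ≤ 6*s+1 by omega)]
    have h0 : 0 ≤ ∑ i ∈ Finset.Ico (3*s+1) (6*s+1), g s i * t i := by
      apply Finset.sum_nonneg
      intro i hi
      rw [Finset.mem_Ico] at hi
      exact mul_nonneg (gnn s i) (htn i (by omega))
    linarith
  -- Step B : reindex
  have hB : ∑ i ∈ Finset.Ico (2*s+1) (3*s+1), g s i * t i
      = ∑ j ∈ Finset.range s, g s (2*s+1+j) * t (2*s+1+j) := by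
    rw [Finset.sum_Ico_eq_sum_range, show 3*s+1 - (2*s+1) = s by omega]
  -- Step C : termwise bound
  have hsum1 : ∑ j ∈ Finset.range s,
      (Cc s (s-1-j) + (if j = 0 then g s (2*s-1) else 0)) * t (2*s+1+j)
      ≤ ∑ j ∈ Finset.range s, g s (2*s+1+j) * t (2*s+1+j) := by
    apply Finset.sum_le_sum
    intro j hj
    rw [Finset.mem_range] at hj
    apply mul_le_mul_of_nonneg_right (coefIneq hs j hj) (htn _ (by omega))
  -- Step D : split the reflected sum
  have hD : ∑ j ∈ Finset.range s,
      (Cc s (s-1-j) + (if j = 0 then g s (2*s-1) else 0)) * t (2*s+1+j)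
      = (∑ m ∈ Finset.range s, Cc s m * t (3*s-m)) + g s (2*s-1) * t (2*s+1) := by
    have e1 : ∀ j ∈ Finset.range s,
        (Cc s (s-1-j) + (if j = 0 then g s (2*s-1) else 0)) * t (2*s+1+j)
        = Cc s (s-1-j) * t (2*s+1+j) + (if j = 0 then g s (2*s-1) * t (2*s+1) else 0) := by
      intro j hj
      split_ifs with h
      · subst h; ring_nf
      · ring
    rw [Finset.sum_congr rfl e1, Finset.sum_add_distrib]
    congr 1
    · have e2 := Finset.sum_range_reflect (fun m => Cc s m * t (3*s-m)) s
      rw [← e2]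
      apply Finset.sum_congr rfl
      intro j hj
      rw [Finset.mem_range] at hj
      rw [show 3*s - (s-1-j) = 2*s+1+j by omega]
    · rw [Finset.sum_ite_eq' (Finset.range s) 0 (fun _ => g s (2*s-1) * t (2*s+1))]
      rw [if_pos (by simp; omega)]
  -- Step E : the lower reindexing
  have hE : (∑ a ∈ Finset.range (2*s-1), g s a * (t (3*s - (a+1)/2) + t (3*s - a/2)))
      ≤ ∑ m ∈ Finset.range s, Cc s m * t (3*s-m) := by
    -- decompose the RHS
    have hR1 : ∑ m ∈ Finset.range s, Cc s m * t (3*s-m)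
        = (∑ m ∈ Finset.range s, g s (2*m-1) * t (3*s-m))
          + (∑ m ∈ Finset.range s, 2 * g s (2*m) * t (3*s-m))
          + (∑ m ∈ Finset.range s, (if 2*m+1 ≤ 2*s-2 then g s (2*m+1) else 0) * t (3*s-m)) := by
      rw [← Finset.sum_add_distrib, ← Finset.sum_add_distrib]
      apply Finset.sum_congr rfl
      intro m _
      unfold Cc
      ring
    have hT1 : ∑ m ∈ Finset.range s, g s (2*m-1) * t (3*s-m)
        = (∑ m ∈ Finset.range (s-1), g s (2*m+1) * t (3*s-m-1)) + g s 0 * t (3*s) := by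
      have h := Finset.sum_range_succ' (fun m => g s (2*m-1) * t (3*s-m)) (s-1)
      rw [show s-1+1 = s by omega] at h
      rw [h]
      congr 1
    have hT2 : ∑ m ∈ Finset.range s, 2 * g s (2*m) * t (3*s-m)
        = (∑ m ∈ Finset.range (s-1), 2 * g s (2*m) * t (3*s-m))
          + 2 * g s (2*s-2) * t (2*s+1) := by
      have h := Finset.sum_range_succ (fun m => 2 * g s (2*m) * t (3*s-m)) (s-1)
      rw [show s-1+1 = s by omega] at h
      rw [h, show 2*(s-1) = 2*s-2 by omega, show 3*s-(s-1) = 2*s+1 by omega]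
    have hT3 : ∑ m ∈ Finset.range s, (if 2*m+1 ≤ 2*s-2 then g s (2*m+1) else 0) * t (3*s-m)
        = ∑ m ∈ Finset.range (s-1), g s (2*m+1) * t (3*s-m) := by
      have h := Finset.sum_range_succ
        (fun m => (if 2*m+1 ≤ 2*s-2 then g s (2*m+1) else 0) * t (3*s-m)) (s-1)
      rw [show s-1+1 = s by omega] at h
      rw [h, if_neg (by omega), zero_mul, add_zero]
      apply Finset.sum_congr rfl
      intro m hm
      rw [Finset.mem_range] at hm
      rw [if_pos (by omega)]
    -- decompose the LHS
    have hL1 : (∑ a ∈ Finset.range (2*s-1), g s a * (t (3*s - (a+1)/2) + t (3*s - a/2)))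
        = (∑ a ∈ Finset.range (2*(s-1)), g s a * (t (3*s - (a+1)/2) + t (3*s - a/2)))
          + g s (2*s-2) * (t (2*s+1) + t (2*s+1)) := by
      have h := Finset.sum_range_succ
        (fun a => g s a * (t (3*s - (a+1)/2) + t (3*s - a/2))) (2*(s-1))
      rw [show 2*(s-1)+1 = 2*s-1 by omega] at h
      rw [h, show 2*(s-1) = 2*s-2 by omega, show (2*s-1)/2 = s-1 by omega,
        show (2*s-2)/2 = s-1 by omega, show 3*s-(s-1) = 2*s+1 by omega]
    have hL2 : (∑ a ∈ Finset.range (2*(s-1)), g s a * (t (3*s - (a+1)/2) + t (3*s - a/2)))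
        = ∑ m ∈ Finset.range (s-1),
            (g s (2*m) * (t (3*s-m) + t (3*s-m))
              + g s (2*m+1) * (t (3*s-m-1) + t (3*s-m))) := by
      rw [evenodd (s-1) (fun a => g s a * (t (3*s - (a+1)/2) + t (3*s - a/2)))]
      apply Finset.sum_congr rfl
      intro m hm
      rw [Finset.mem_range] at hm
      rw [show (2*m+1)/2 = m by omega, show (2*m)/2 = m by omega,
        show (2*m+1+1)/2 = m+1 by omega, show 3*s-(m+1) = 3*s-m-1 by omega]
    have hnn : 0 ≤ g s 0 * t (3*s) := mul_nonneg (gnn s 0) (htn (3*s) (by omega))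
    have hcomb : (∑ m ∈ Finset.range (s-1), g s (2*m) * (t (3*s-m) + t (3*s-m)))
        = ∑ m ∈ Finset.range (s-1), 2 * g s (2*m) * t (3*s-m) := by
      apply Finset.sum_congr rfl
      intro m _
      ring
    have hcomb2 : (∑ m ∈ Finset.range (s-1),
          (g s (2*m) * (t (3*s-m) + t (3*s-m)) + g s (2*m+1) * (t (3*s-m-1) + t (3*s-m))))
        = (∑ m ∈ Finset.range (s-1), 2 * g s (2*m) * t (3*s-m))
          + (∑ m ∈ Finset.range (s-1), g s (2*m+1) * t (3*s-m-1))
          + (∑ m ∈ Finset.range (s-1), g s (2*m+1) * t (3*s-m)) := by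
      rw [← Finset.sum_add_distrib, ← Finset.sum_add_distrib]
      apply Finset.sum_congr rfl
      intro m _
      ring
    rw [hR1, hT1, hT2, hT3, hL1, hL2, hcomb2]
    linarith
  -- final assembly
  have hsplit := splitObj hs t
  have c1 := htc (2*s-1) (2*s) (2*s+1) (by omega)
  have c2 := htc (2*s) (2*s) (2*s) (by omega)
  have m1 : g s (2*s-1) ≤ g s (2*s) := gmono s (by omega) (by omega)
  have p1 := mul_le_mul_of_nonneg_left c1 (gnn s (2*s-1))
  have p2 := mul_le_mul_of_nonneg_left c2 (sub_nonneg.mpr m1)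
  have hTriple : (∑ a ∈ Finset.range (2*s-1), g s a)
      ≤ ∑ a ∈ Finset.range (2*s-1), g s a * (t a + t (3*s - (a+1)/2) + t (3*s - a/2)) := by
    apply Finset.sum_le_sum
    intro a ha
    rw [Finset.mem_range] at ha
    have hc := htc a (3*s - (a+1)/2) (3*s - a/2) (by omega)
    calc g s a = g s a * 1 := (mul_one _).symm
      _ ≤ _ := mul_le_mul_of_nonneg_left hc (gnn s a)
  have hMerge : (∑ a ∈ Finset.range (2*s-1), g s a * t a)
      + (∑ a ∈ Finset.range (2*s-1), g s a * (t (3*s - (a+1)/2) + t (3*s - a/2)))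
      = ∑ a ∈ Finset.range (2*s-1), g s a * (t a + t (3*s - (a+1)/2) + t (3*s - a/2)) := by
    rw [← Finset.sum_add_distrib]
    apply Finset.sum_congr rfl
    intro a _
    ring
  linarith [hIco1, hB, hsum1, hD, hE, hsplit, hTriple, hMerge, p1, p2]

end master3
end CapLP

/-- For `n = 3s` with `s` large, the vector with `tᵢ = 1` for `i ≤ 2s-2`,
`t_{2s-1} = 2/3`, `t_{2s} = 1/3` and `tᵢ = 0` for `i ≥ 2s+1` is an optimal
solution of the cap set linear program. -/
theorem lp_optimal_three_s :
    ∃ S : ℕ, ∀ s : ℕ, S ≤ s →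
      LPFeasible (3 * s) (fun i => if i ≤ 2 * s - 2 then 1
        else if i = 2 * s - 1 then 2 / 3 else if i = 2 * s then 1 / 3 else 0) ∧
      ∀ t : ℕ → ℝ, LPFeasible (3 * s) t →
        LPObj (3 * s) (fun i => if i ≤ 2 * s - 2 then 1
          else if i = 2 * s - 1 then 2 / 3 else if i = 2 * s then 1 / 3 else 0) ≤
        LPObj (3 * s) t := by
  refine ⟨500, fun s hs => ⟨?_, ?_⟩⟩
  · exact CapLP.feasW hs
  · intro t ht
    have htn : ∀ i, i ≤ 6*s → 0 ≤ t i := fun i hi => ht.1 i (by omega)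
    have htc : ∀ i j k : ℕ, i + j + k ≤ 6*s → 1 ≤ t i + t j + t k :=
      fun i j k h => ht.2 i j k (by omega)
    unfold LPObj
    rw [show 2*(3*s)+1 = 6*s+1 by ring]
    have h1 := CapLP.objW hs
    have h2 := CapLP.mainIneq hs t htn htc
    have e1 : ∑ i ∈ Finset.range (6*s+1), (coeff3 (3*s) i : ℝ) * (fun i => if i ≤ 2 * s - 2 then 1
          else if i = 2 * s - 1 then 2 / 3 else if i = 2 * s then 1 / 3 else 0) i
        = ∑ i ∈ Finset.range (6*s+1), CapLP.g s i * CapLP.wfun s i := rfl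
    have e2 : ∑ i ∈ Finset.range (6*s+1), (coeff3 (3*s) i : ℝ) * t i
        = ∑ i ∈ Finset.range (6*s+1), CapLP.g s i * t i := rfl
    rw [e1, e2, h1]
    linarith
end
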